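/- arXiv:1709.09795 — 4 statements merged into one kernel-verified Lean document; each statement's English description precedes it below -/
import Mathlib

section
/- Let Φ_ε(x,y) = ε⁻¹·arccos(ε²(x·y) + √((1−ε²|x|²)(1−ε²|y|²))). Then for x, y ∈ ℝ^d with 2⁻³ ≤ |x−y| ≤ 2³, Φ_ε(x,y) converges to |x−y| as ε → 0⁺. -/
open Real Set Filter
open scoped RealInnerProductSpace

lemma arcsin_div_self_tendsto :
    Tendsto (fun t : ℝ => Real.arcsin t / t) (nhdsWithin 0 {0}ᶜ) (nhds 1) := by
  have h : HasDerivAt Real.arcsin 1 0 := by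
    have := Real.hasDerivAt_arcsin (x := 0) (by norm_num) (by norm_num)
    simpa using this
  have h2 := hasDerivAt_iff_tendsto_slope.mp h
  refine h2.congr fun t => ?_
  simp [slope_def_field]

theorem Phi_eps_tendsto (d : ℕ) (x y : EuclideanSpace ℝ (Fin d))
    (h₁ : (2:ℝ)^(-3:ℤ) ≤ ‖x - y‖) (h₂ : ‖x - y‖ ≤ (2:ℝ)^(3:ℤ)) :
    Filter.Tendsto
      (fun ε : ℝ =>
        ε⁻¹ * Real.arccos (ε^2 * ⟪x, y⟫ +
          Real.sqrt ((1 - ε^2 * ‖x‖^2) * (1 - ε^2 * ‖y‖^2))))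
      (nhdsWithin (0:ℝ) (Set.Ioi 0))
      (nhds ‖x - y‖) := by
  have hs : (0:ℝ) < ‖x - y‖ := lt_of_lt_of_le (by norm_num) h₁
  set a : ℝ := ‖x‖^2 with ha
  set b : ℝ := ‖y‖^2 with hb
  set c : ℝ := ⟪x, y⟫ with hc
  set s : ℝ := ‖x - y‖ with hsdef
  have hsq : s^2 = a + b - 2*c := by
    rw [ha, hb, hc, hsdef, norm_sub_sq_real]; ring
  set g : ℝ → ℝ := fun ε => ε^2 * c + Real.sqrt ((1 - ε^2 * a) * (1 - ε^2 * b)) with hg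
  set D : ℝ → ℝ := fun ε => (1 - ε^2 * c) + Real.sqrt ((1 - ε^2 * a) * (1 - ε^2 * b)) with hD
  set N : ℝ → ℝ := fun ε => s^2 - ε^2 * (a*b - c^2) with hN
  set G : ℝ → ℝ := fun ε => N ε * (1 + g ε) / D ε with hG
  -- continuity
  have hcg : Continuous g := by fun_prop
  have hcD : Continuous D := by fun_prop
  have hcN : Continuous N := by fun_prop
  have hg0 : g 0 = 1 := by simp [hg]
  have hD0 : D 0 = 2 := by norm_num [hD]
  have hG0 : Tendsto G (nhds 0) (nhds (s^2)) := by
    have h1 : Tendsto G (nhds 0) (nhds (N 0 * (1 + g 0) / D 0)) :=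
      ((hcN.tendsto 0).mul ((tendsto_const_nhds).add (hcg.tendsto 0))).div
        (hcD.tendsto 0) (by rw [hD0]; norm_num)
    have h2 : N 0 * (1 + g 0) / D 0 = s^2 := by rw [hg0, hD0]; norm_num [hN]
    rwa [h2] at h1
  have l := nhdsWithin (0:ℝ) (Set.Ioi 0)
  -- eventual facts
  have hev_pos : ∀ᶠ ε in nhdsWithin (0:ℝ) (Set.Ioi 0), (0:ℝ) < ε :=
    eventually_mem_nhdsWithin
  have hta : Tendsto (fun ε : ℝ => ε^2 * a) (nhdsWithin (0:ℝ) (Set.Ioi 0)) (nhds 0) := by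
    have : Continuous (fun ε : ℝ => ε^2 * a) := by fun_prop
    simpa using (this.tendsto 0).mono_left nhdsWithin_le_nhds
  have htb : Tendsto (fun ε : ℝ => ε^2 * b) (nhdsWithin (0:ℝ) (Set.Ioi 0)) (nhds 0) := by
    have : Continuous (fun ε : ℝ => ε^2 * b) := by fun_prop
    simpa using (this.tendsto 0).mono_left nhdsWithin_le_nhds
  have hev_a : ∀ᶠ ε in nhdsWithin (0:ℝ) (Set.Ioi 0), ε^2 * a ≤ 1 :=
    hta.eventually_le_const (by norm_num : (0:ℝ) < 1)
  have hev_b : ∀ᶠ ε in nhdsWithin (0:ℝ) (Set.Ioi 0), ε^2 * b ≤ 1 :=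
    htb.eventually_le_const (by norm_num : (0:ℝ) < 1)
  have htD : Tendsto D (nhdsWithin (0:ℝ) (Set.Ioi 0)) (nhds 2) := by
    simpa [hD0] using (hcD.tendsto 0).mono_left nhdsWithin_le_nhds
  have hev_D : ∀ᶠ ε in nhdsWithin (0:ℝ) (Set.Ioi 0), 0 < D ε :=
    htD.eventually_const_lt (by norm_num)
  have htN : Tendsto N (nhdsWithin (0:ℝ) (Set.Ioi 0)) (nhds (s^2)) := by
    simpa [hN] using (hcN.tendsto 0).mono_left nhdsWithin_le_nhds
  have hev_N : ∀ᶠ ε in nhdsWithin (0:ℝ) (Set.Ioi 0), 0 < N ε :=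
    htN.eventually_const_lt (by positivity)
  have htg : Tendsto g (nhdsWithin (0:ℝ) (Set.Ioi 0)) (nhds 1) := by
    simpa [hg0] using (hcg.tendsto 0).mono_left nhdsWithin_le_nhds
  have hev_g : ∀ᶠ ε in nhdsWithin (0:ℝ) (Set.Ioi 0), 0 < g ε :=
    htg.eventually_const_lt (by norm_num)
  have htG : Tendsto G (nhdsWithin (0:ℝ) (Set.Ioi 0)) (nhds (s^2)) :=
    hG0.mono_left nhdsWithin_le_nhds
  have hev_G : ∀ᶠ ε in nhdsWithin (0:ℝ) (Set.Ioi 0), 0 < G ε :=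
    htG.eventually_const_lt (by positivity)
  -- key identity: 1 - (g ε)^2 = ε^2 * G ε
  have key : ∀ ε : ℝ, ε^2 * a ≤ 1 → ε^2 * b ≤ 1 → 0 < D ε →
      1 - (g ε)^2 = ε^2 * G ε := by
    intro ε hA hB hDpos
    have hP : (0:ℝ) ≤ (1 - ε^2 * a) * (1 - ε^2 * b) :=
      mul_nonneg (by linarith) (by linarith)
    have hq2 : Real.sqrt ((1 - ε^2 * a) * (1 - ε^2 * b)) ^ 2
        = (1 - ε^2 * a) * (1 - ε^2 * b) := Real.sq_sqrt hP
    have hkey : D ε * (1 - (g ε)^2) = ε^2 * (N ε * (1 + g ε)) := by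
      simp only [hg, hD, hN]
      set q := Real.sqrt ((1 - ε^2 * a) * (1 - ε^2 * b)) with hqdef
      linear_combination (-(1 + (ε^2 * c + q))) * hq2 +
        (-(ε^2 * (1 + (ε^2 * c + q)))) * hsq
    rw [hG]
    field_simp
    linarith [hkey]
  -- eventual equality with nice form
  have hev_eq : ∀ᶠ ε in nhdsWithin (0:ℝ) (Set.Ioi 0),
      (Real.arcsin (ε * Real.sqrt (G ε)) / (ε * Real.sqrt (G ε))) * Real.sqrt (G ε)
        = ε⁻¹ * Real.arccos (ε^2 * c +
          Real.sqrt ((1 - ε^2 * a) * (1 - ε^2 * b))) := by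
    filter_upwards [hev_pos, hev_a, hev_b, hev_D, hev_g, hev_G] with ε hε hA hB hDp hgp hGp
    have h1 : 1 - (g ε)^2 = ε^2 * G ε := key ε hA hB hDp
    have harc : Real.arccos (g ε) = Real.arcsin (Real.sqrt (1 - (g ε)^2)) :=
      Real.arccos_eq_arcsin hgp.le
    have hsq2 : Real.sqrt (1 - (g ε)^2) = ε * Real.sqrt (G ε) := by
      rw [h1, Real.sqrt_mul (sq_nonneg ε), Real.sqrt_sq hε.le]
    have hGne : Real.sqrt (G ε) ≠ 0 := (Real.sqrt_pos.mpr hGp).ne'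
    have hge : (ε^2 * c + Real.sqrt ((1 - ε^2 * a) * (1 - ε^2 * b))) = g ε := rfl
    rw [hge, harc, hsq2]
    field_simp
  refine Tendsto.congr' hev_eq ?_
  have hw : Tendsto (fun ε : ℝ => ε * Real.sqrt (G ε)) (nhdsWithin (0:ℝ) (Set.Ioi 0))
      (nhdsWithin (0:ℝ) {0}ᶜ) := by
    rw [tendsto_nhdsWithin_iff]
    constructor
    · have h1 : Tendsto (fun ε : ℝ => ε) (nhdsWithin (0:ℝ) (Set.Ioi 0)) (nhds 0) :=
        tendsto_id.mono_left nhdsWithin_le_nhds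
      have h2 : Tendsto (fun ε : ℝ => Real.sqrt (G ε)) (nhdsWithin (0:ℝ) (Set.Ioi 0))
          (nhds (Real.sqrt (s^2))) := (Real.continuous_sqrt.tendsto _).comp htG
      simpa using h1.mul h2
    · filter_upwards [hev_pos, hev_G] with ε hε hGp
      exact (mul_pos hε (Real.sqrt_pos.mpr hGp)).ne'
  have hT1 : Tendsto (fun ε : ℝ =>
      Real.arcsin (ε * Real.sqrt (G ε)) / (ε * Real.sqrt (G ε)))
      (nhdsWithin (0:ℝ) (Set.Ioi 0)) (nhds 1) :=
    arcsin_div_self_tendsto.comp hw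
  have hT2 : Tendsto (fun ε : ℝ => Real.sqrt (G ε)) (nhdsWithin (0:ℝ) (Set.Ioi 0))
      (nhds s) := by
    have := (Real.continuous_sqrt.tendsto (s^2)).comp htG
    simpa [Real.sqrt_sq hs.le, Function.comp_def] using this
  simpa using hT1.mul hT2
end

section
/- Let α ≠ 0 be real. If α > 0, then (1/(2π)) ∫_ℝ e^{its}/(is+α) ds = e^{−tα}·1_{(0,∞)}(t) for t ≠ 0, and if α < 0, then (1/(2π)) ∫_ℝ e^{its}/(is+α) ds = −e^{−tα}·1_{(−∞,0)}(t) for t ≠ 0, where the integral is understood as an improper (principal value) integral. -/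
open Real Set Filter Complex intervalIntegral MeasureTheory Topology

-- Laplace transform of sin on finite interval, via FTC
lemma laplace_sin (x T : ℝ) :
    ∫ v in (0:ℝ)..T, Real.exp (-(x*v)) * Real.sin v
      = (1 - Real.exp (-(x*T)) * (x * Real.sin T + Real.cos T))/(1+x^2) := by
  have h1x : (1:ℝ) + x^2 ≠ 0 := by positivity
  have key : ∀ v : ℝ, HasDerivAt (fun v => -(Real.exp (-(x*v)) * (x * Real.sin v + Real.cos v))/(1+x^2))
      (Real.exp (-(x*v)) * Real.sin v) v := by
    intro v
    have h1 : HasDerivAt (fun v : ℝ => Real.exp (-(x*v))) (Real.exp (-(x*v)) * (-x)) v := by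
      have := (Real.hasDerivAt_exp (-(x*v))).comp v (((hasDerivAt_id v).const_mul x).neg)
      exact this.congr_deriv (by ring)
    have h2 : HasDerivAt (fun v : ℝ => x * Real.sin v + Real.cos v)
        (x * Real.cos v + (-Real.sin v)) v :=
      ((Real.hasDerivAt_sin v).const_mul x).add (Real.hasDerivAt_cos v)
    have h3 := (h1.mul h2).neg.div_const (1+x^2)
    refine h3.congr_deriv ?_
    field_simp
    ring
  rw [intervalIntegral.integral_eq_sub_of_hasDerivAt (fun v _ => key v)
    ((Continuous.mul (by continuity) Real.continuous_sin).intervalIntegrable 0 T)]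
  simp [Real.exp_zero]
  ring

lemma tendsto_cexp_neg (c : ℂ) (hc : 0 < c.re) :
    Tendsto (fun u : ℝ => Complex.exp (-(c*u))) atTop (𝓝 0) := by
  rw [tendsto_zero_iff_norm_tendsto_zero]
  have : (fun u : ℝ => ‖Complex.exp (-(c*u))‖) = fun u : ℝ => Real.exp (-(c.re*u)) := by
    ext u; simp [Complex.norm_exp]
  rw [this]
  exact Real.tendsto_exp_atBot.comp (tendsto_neg_atBot_iff.mpr
    (Tendsto.const_mul_atTop hc tendsto_id))

lemma integral_cexp_Ioi (c : ℂ) (hc : 0 < c.re) :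
    ∫ u in Ioi (0:ℝ), Complex.exp (-(c*u)) = 1/c := by
  have hc0 : c ≠ 0 := fun h => by simp [h] at hc
  have hint : IntegrableOn (fun u : ℝ => Complex.exp (-(c*u))) (Ioi 0) := by
    apply (exp_neg_integrableOn_Ioi 0 hc).mono'
      (Continuous.aestronglyMeasurable (by continuity))
    filter_upwards [] with u
    simp [Complex.norm_exp, mul_comm]
  have hderiv : ∀ u ∈ Ioi (0:ℝ), HasDerivAt (fun u : ℝ => -Complex.exp (-(c*u))/c)
      (Complex.exp (-(c*u))) u := by
    intro u _
    have h1 : HasDerivAt (fun u : ℝ => -(c*u)) (-c) u := by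
      exact ((Complex.ofRealCLM.hasDerivAt (x := u)).const_mul c).neg.congr_deriv (by simp)
    have := ((Complex.hasDerivAt_exp (-(c*u))).comp u h1).neg.div_const c
    refine this.congr_deriv ?_
    field_simp
  have htend : Tendsto (fun u : ℝ => -Complex.exp (-(c*u))/c) atTop (𝓝 0) := by
    rw [show (0:ℂ) = -0/c by simp]
    exact ((tendsto_cexp_neg c hc).neg).div_const c
  have := MeasureTheory.integral_Ioi_of_hasDerivAt_of_tendsto
    (f := fun u : ℝ => -Complex.exp (-(c*u))/c) (f' := fun u : ℝ => Complex.exp (-(c*u)))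
    (a := 0) (m := 0) (Continuous.continuousWithinAt (by continuity)) hderiv hint htend
  rw [this]
  simp
  rw [div_eq_mul_inv]; simp

-- 1/v as an integral
lemma one_div_eq_integral (v : ℝ) (hv : 0 < v) :
    ∫ x in Ioi (0:ℝ), Real.exp (-(v*x)) = 1/v := by
  have hint : IntegrableOn (fun x : ℝ => Real.exp (-(v*x))) (Ioi 0) := by
    simpa [mul_comm] using exp_neg_integrableOn_Ioi 0 hv
  have hderiv : ∀ x ∈ Ioi (0:ℝ), HasDerivAt (fun x : ℝ => -Real.exp (-(v*x))/v)
      (Real.exp (-(v*x))) x := by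
    intro x _
    have h1 : HasDerivAt (fun x : ℝ => -(v*x)) (-v) x := by
      exact ((hasDerivAt_id x).const_mul v).neg.congr_deriv (by simp)
    have := ((Real.hasDerivAt_exp (-(v*x))).comp x h1).neg.div_const v
    refine this.congr_deriv ?_
    field_simp
  have htend : Tendsto (fun x : ℝ => -Real.exp (-(v*x))/v) atTop (𝓝 0) := by
    rw [show (0:ℝ) = -0/v by simp]
    apply Tendsto.div_const (Tendsto.neg ?_)
    exact Real.tendsto_exp_atBot.comp (tendsto_neg_atBot_iff.mpr
      (Tendsto.const_mul_atTop hv tendsto_id))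
  have := MeasureTheory.integral_Ioi_of_hasDerivAt_of_tendsto
    (f := fun x : ℝ => -Real.exp (-(v*x))/v) (f' := fun x : ℝ => Real.exp (-(v*x)))
    (a := 0) (m := 0) (Continuous.continuousWithinAt (by continuity)) hderiv hint htend
  rw [this]
  simp
  field_simp

lemma dirichlet_rep (T : ℝ) (hT : 0 < T) :
    ∫ v in (0:ℝ)..T, Real.sin v / v
      = ∫ x in Ioi (0:ℝ), (1 - Real.exp (-(x*T)) * (x * Real.sin T + Real.cos T))/(1+x^2) := by
  have hmeas : AEStronglyMeasurable (fun p : ℝ × ℝ => Real.exp (-(p.1*p.2)) * Real.sin p.1)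
      (((volume:Measure ℝ).restrict (Ioc 0 T)).prod ((volume:Measure ℝ).restrict (Ioi 0))) :=
    Continuous.aestronglyMeasurable
      (((continuous_fst.mul continuous_snd).neg.rexp).mul (Real.continuous_sin.comp continuous_fst))
  have hInt : Integrable (fun p : ℝ × ℝ => Real.exp (-(p.1*p.2)) * Real.sin p.1)
      (((volume:Measure ℝ).restrict (Ioc 0 T)).prod ((volume:Measure ℝ).restrict (Ioi 0))) := by
    rw [MeasureTheory.integrable_prod_iff hmeas]
    constructor
    · filter_upwards [ae_restrict_mem measurableSet_Ioc] with v hv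
      apply Integrable.mul_const
      simpa [mul_comm, IntegrableOn] using (exp_neg_integrableOn_Ioi 0 hv.1)
    · apply Integrable.mono' (g := fun _ : ℝ => (1:ℝ))
        (integrable_const _)
      · apply AEStronglyMeasurable.integral_prod_right'
          (f := fun p : ℝ × ℝ => ‖Real.exp (-(p.1*p.2)) * Real.sin p.1‖)
        exact Continuous.aestronglyMeasurable
          (((continuous_fst.mul continuous_snd).neg.rexp).mul
            (Real.continuous_sin.comp continuous_fst)).norm
      · filter_upwards [ae_restrict_mem measurableSet_Ioc] with v hv
        have h1 : ∀ x : ℝ, ‖Real.exp (-(v*x)) * Real.sin v‖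
            = Real.exp (-(v*x)) * |Real.sin v| := by
          intro x; simp [abs_mul, abs_of_pos (Real.exp_pos _)]
        rw [Real.norm_eq_abs, _root_.abs_of_nonneg (MeasureTheory.integral_nonneg (fun _ => norm_nonneg _))]
        calc ∫ x in Ioi (0:ℝ), ‖Real.exp (-(v*x)) * Real.sin v‖
            = ∫ x in Ioi (0:ℝ), Real.exp (-(v*x)) * |Real.sin v| := by
              simp_rw [h1]
          _ = (1/v) * |Real.sin v| := by
              rw [MeasureTheory.integral_mul_const, one_div_eq_integral v hv.1]
          _ ≤ (1/v) * v := by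
              apply mul_le_mul_of_nonneg_left _ (one_div_nonneg.mpr hv.1.le)
              exact (Real.abs_sin_le_abs).trans_eq (_root_.abs_of_pos hv.1)
          _ = 1 := one_div_mul_cancel hv.1.ne'
  have swap := MeasureTheory.integral_integral_swap
    (f := fun v x : ℝ => Real.exp (-(v*x)) * Real.sin v) hInt
  calc ∫ v in (0:ℝ)..T, Real.sin v / v
      = ∫ v in Ioc (0:ℝ) T, Real.sin v / v := by
        rw [intervalIntegral.integral_of_le hT.le]
    _ = ∫ v in Ioc (0:ℝ) T, ∫ x in Ioi (0:ℝ), Real.exp (-(v*x)) * Real.sin v := by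
        apply MeasureTheory.setIntegral_congr_fun measurableSet_Ioc
        intro v hv
        simp only
        rw [MeasureTheory.integral_mul_const, one_div_eq_integral v hv.1]
        ring
    _ = ∫ x in Ioi (0:ℝ), ∫ v in Ioc (0:ℝ) T, Real.exp (-(v*x)) * Real.sin v := swap
    _ = ∫ x in Ioi (0:ℝ), (1 - Real.exp (-(x*T)) * (x * Real.sin T + Real.cos T))/(1+x^2) := by
        apply MeasureTheory.setIntegral_congr_fun measurableSet_Ioi
        intro x _
        simp only
        rw [← intervalIntegral.integral_of_le hT.le, ← laplace_sin x T]
        exact intervalIntegral.integral_congr (fun v _ => by rw [mul_comm v x])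

lemma abs_aux (x T : ℝ) (hx : 0 < x) : |x * Real.sin T + Real.cos T| ≤ x + 1 := by
  rw [abs_le]
  constructor
  · nlinarith [Real.neg_one_le_sin T, Real.neg_one_le_cos T]
  · nlinarith [Real.sin_le_one T, Real.cos_le_one T]

lemma exp_aux (x : ℝ) : Real.exp (-x) * (x+1) ≤ 1 := by
  have h := mul_le_mul_of_nonneg_left (Real.add_one_le_exp x) (Real.exp_pos (-x)).le
  rwa [← Real.exp_add, neg_add_cancel, Real.exp_zero] at h

lemma tendsto_dirichlet :
    Tendsto (fun T : ℝ => ∫ v in (0:ℝ)..T, Real.sin v / v) atTop (𝓝 (π/2)) := by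
  have hbound_int : Integrable (fun x : ℝ => 2*(1+x^2)⁻¹)
      ((volume : Measure ℝ).restrict (Ioi 0)) :=
    (integrable_inv_one_add_sq.restrict (s := Ioi 0)).const_mul 2
  have key : Tendsto (fun T : ℝ => ∫ x in Ioi (0:ℝ),
      (1 - Real.exp (-(x*T)) * (x * Real.sin T + Real.cos T))/(1+x^2)) atTop (𝓝 (π/2)) := by
    have h := MeasureTheory.tendsto_integral_filter_of_dominated_convergence
      (μ := (volume : Measure ℝ).restrict (Ioi 0))
      (F := fun (T : ℝ) (x : ℝ) => (1 - Real.exp (-(x*T)) * (x * Real.sin T + Real.cos T))/(1+x^2))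
      (f := fun x : ℝ => (1+x^2)⁻¹) (bound := fun x : ℝ => 2*(1+x^2)⁻¹)
      (l := atTop) ?_ ?_ hbound_int ?_
    · have : ∫ x in Ioi (0:ℝ), (1+x^2)⁻¹ = π/2 := by
        rw [integral_Ioi_inv_one_add_sq]; simp
      rwa [this] at h
    · filter_upwards [] with T
      apply Continuous.aestronglyMeasurable
      apply Continuous.div (by continuity) (by continuity)
      intro x; positivity
    · filter_upwards [eventually_ge_atTop (1:ℝ)] with T hT
      filter_upwards [ae_restrict_mem measurableSet_Ioi] with x hx
      have hx' : (0:ℝ) < x := hx.out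
      have h1x : (0:ℝ) < 1 + x^2 := by positivity
      rw [Real.norm_eq_abs, abs_div, _root_.abs_of_pos h1x, div_le_iff₀ h1x,
        mul_assoc, inv_mul_cancel₀ h1x.ne', mul_one]
      have hb := abs_aux x T hx'
      rw [abs_le] at hb
      have hE : (0:ℝ) < Real.exp (-(x*T)) := Real.exp_pos _
      have he : Real.exp (-(x*T)) ≤ Real.exp (-x) := by
        apply Real.exp_le_exp.mpr; nlinarith
      have h1 := mul_le_mul_of_nonneg_left hb.2 hE.le
      have h2 := mul_le_mul_of_nonneg_left hb.1 hE.le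
      have h3 := mul_le_mul_of_nonneg_right he (by linarith : (0:ℝ) ≤ x+1)
      have h4 := exp_aux x
      rw [abs_le]
      constructor <;> nlinarith
    · filter_upwards [ae_restrict_mem measurableSet_Ioi] with x hx
      have hx' : (0:ℝ) < x := hx.out
      have h1x : (0:ℝ) < 1 + x^2 := by positivity
      have hg : Tendsto (fun T : ℝ => Real.exp (-(x*T)) * (x+1)) atTop (𝓝 0) := by
        rw [show (0:ℝ) = 0 * (x+1) by ring]
        apply Tendsto.mul_const
        exact Real.tendsto_exp_atBot.comp (tendsto_neg_atBot_iff.mpr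
          (Tendsto.const_mul_atTop hx' tendsto_id))
      have hlim : Tendsto (fun T : ℝ => Real.exp (-(x*T)) * (x * Real.sin T + Real.cos T))
          atTop (𝓝 0) := by
        apply squeeze_zero_norm _ hg
        intro T
        rw [norm_mul, Real.norm_eq_abs, Real.norm_eq_abs, _root_.abs_of_pos (Real.exp_pos _)]
        exact mul_le_mul_of_nonneg_left (abs_aux x T hx') (Real.exp_pos _).le
      have := ((tendsto_const_nhds (x := (1:ℝ)) (f := atTop)).sub hlim).div_const (1+x^2)
      simpa using this
  apply key.congr'
  filter_upwards [eventually_gt_atTop (0:ℝ)] with T hT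
  exact (dirichlet_rep T hT).symm

lemma sinc_intble (R a b : ℝ) : IntervalIntegrable (fun v => Real.sin (R*v)/v) volume a b := by
  rw [intervalIntegrable_iff]
  apply Integrable.mono' (g := fun _ => |R|)
  · exact integrableOn_const measure_Ioc_lt_top.ne
  · exact ((Real.measurable_sin.comp (measurable_id.const_mul R)).div
      measurable_id).aestronglyMeasurable
  · filter_upwards [] with v
    rw [Real.norm_eq_abs, abs_div]
    rcases eq_or_ne v 0 with rfl|hv
    · simp
    · rw [div_le_iff₀ (abs_pos.mpr hv)]
      calc |Real.sin (R*v)| ≤ |R*v| := Real.abs_sin_le_abs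
        _ = |R| * |v| := abs_mul R v

lemma sinc_scale (R b : ℝ) (hR : R ≠ 0) :
    ∫ v in (0:ℝ)..b, Real.sin (R*v)/v = ∫ u in (0:ℝ)..(R*b), Real.sin u/u := by
  have hfun : (fun v => Real.sin (R*v)/v) = fun v => R * ((fun u => Real.sin u/u) (R*v)) := by
    funext v
    rcases eq_or_ne v 0 with rfl|hv
    · simp
    · field_simp
  rw [hfun, intervalIntegral.integral_const_mul, ← smul_eq_mul,
    intervalIntegral.smul_integral_comp_mul_left (fun u => Real.sin u/u) R, mul_zero]

lemma sinc_neg_eq (R a : ℝ) :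
    ∫ v in (-a)..(0:ℝ), Real.sin (R*v)/v = ∫ v in (0:ℝ)..a, Real.sin (R*v)/v := by
  have : ∫ v in (0:ℝ)..a, Real.sin (R*v)/v
      = ∫ v in (0:ℝ)..a, (fun v => Real.sin (R*v)/v) (-v) := by
    apply intervalIntegral.integral_congr
    intro v _
    simp [mul_neg, Real.sin_neg, neg_div_neg_eq]
  rw [this, intervalIntegral.integral_comp_neg (fun v => Real.sin (R*v)/v)]
  norm_num

lemma tendsto_sinc_two_sided (a b : ℝ) (ha : 0 < a) (hb : 0 < b) :
    Tendsto (fun R : ℝ => ∫ v in (-a)..b, Real.sin (R*v)/v) atTop (𝓝 π) := by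
  have h1 : Tendsto (fun R : ℝ => ∫ v in (0:ℝ)..(R*a), Real.sin v/v) atTop (𝓝 (π/2)) :=
    tendsto_dirichlet.comp (Tendsto.atTop_mul_const ha tendsto_id)
  have h2 : Tendsto (fun R : ℝ => ∫ v in (0:ℝ)..(R*b), Real.sin v/v) atTop (𝓝 (π/2)) :=
    tendsto_dirichlet.comp (Tendsto.atTop_mul_const hb tendsto_id)
  have key := h1.add h2
  rw [show π/2 + π/2 = π by ring] at key
  apply key.congr'
  filter_upwards [eventually_gt_atTop (0:ℝ)] with R hR
  have split := intervalIntegral.integral_add_adjacent_intervals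
    (sinc_intble R (-a) 0) (sinc_intble R 0 b)
  rw [← split, sinc_neg_eq R a, sinc_scale R a hR.ne', sinc_scale R b hR.ne']

lemma rl_sin (g : ℝ → ℝ) (hg : MeasureTheory.Integrable g) (t : ℝ) :
    Tendsto (fun R : ℝ => ∫ u : ℝ, g u * Real.sin (R*(t-u))) atTop (𝓝 0) := by
  have hπ : (0:ℝ) < 2*π := by positivity
  set G : ℝ → ℂ := fun u => (g u : ℂ) with hG
  have hGint : MeasureTheory.Integrable G := hg.ofReal
  have h0 : Tendsto (fun w : ℝ => ∫ v : ℝ, Real.fourierChar (-(v*w)) • G v)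
      (cocompact ℝ) (𝓝 0) := Real.tendsto_integral_exp_smul_cocompact G
  have h1 : Tendsto (fun R : ℝ => R/(2*π)) atTop (cocompact ℝ) :=
    (tendsto_id.atTop_div_const hπ).mono_right _root_.atTop_le_cocompact
  have h : Tendsto (fun R : ℝ => ‖∫ v : ℝ, Real.fourierChar (-(v*(R/(2*π)))) • G v‖)
      atTop (𝓝 0) := by simpa using (h0.comp h1).norm
  apply squeeze_zero_norm _ h
  intro R
  -- rewrite fourier char integral
  have hchar : ∀ v : ℝ, Real.fourierChar (-(v*(R/(2*π)))) • G v
      = Complex.exp (-(v*R)*Complex.I) * G v := by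
    intro v
    rw [Circle.smul_def, Real.fourierChar_apply]
    congr 2
    push_cast
    have hπc : (π:ℂ) ≠ 0 := Complex.ofReal_ne_zero.mpr Real.pi_ne_zero
    field_simp
  have heq : (∫ v : ℝ, Real.fourierChar (-(v*(R/(2*π)))) • G v)
      = ∫ v : ℝ, Complex.exp (-(v*R)*Complex.I) * G v := by
    congr 1; funext v; exact hchar v
  -- integrability of the complex integrand
  have hint2 : MeasureTheory.Integrable (fun u : ℝ => Complex.exp ((R*(t-u))*Complex.I) * G u) := by
    apply hGint.bdd_mul  (c := 1)
    · apply Continuous.aestronglyMeasurable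
      continuity
    · filter_upwards [] with u
      rw [show ((R*(t-u)):ℂ) = ((R*(t-u):ℝ):ℂ) by push_cast; ring]
      rw [Complex.norm_exp_ofReal_mul_I]
  -- main identity
  have key : (∫ u : ℝ, g u * Real.sin (R*(t-u)))
      = (Complex.exp ((R*t)*Complex.I) * ∫ v : ℝ, Complex.exp (-(v*R)*Complex.I) * G v).im := by
    rw [← MeasureTheory.integral_const_mul]
    have : ∀ u : ℝ, Complex.exp ((R*t)*Complex.I) * (Complex.exp (-(u*R)*Complex.I) * G u)
        = Complex.exp ((R*(t-u))*Complex.I) * G u := by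
      intro u
      rw [← mul_assoc, ← Complex.exp_add]
      congr 2
      push_cast
      ring
    simp_rw [this]
    rw [show (∫ u : ℝ, Complex.exp ((R*(t-u))*Complex.I) * G u).im
        = ∫ u : ℝ, (Complex.exp ((R*(t-u))*Complex.I) * G u).im from
      (ContinuousLinearMap.integral_comp_comm Complex.imCLM hint2).symm]
    congr 1
    funext u
    rw [show ((R*(t-u))*Complex.I : ℂ) = ((R*(t-u):ℝ):ℂ)*Complex.I by push_cast; ring,
      Complex.exp_mul_I, ← Complex.ofReal_cos, ← Complex.ofReal_sin]
    simp only [hG, add_mul, Complex.add_im, Complex.mul_im, Complex.ofReal_re,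
      Complex.ofReal_im, Complex.I_re, Complex.I_im]
    ring
  rw [key, heq]
  calc |(Complex.exp ((R*t)*Complex.I) * ∫ v : ℝ, Complex.exp (-(v*R)*Complex.I) * G v).im|
      ≤ ‖(Complex.exp ((R*t)*Complex.I) * ∫ v : ℝ, Complex.exp (-(v*R)*Complex.I) * G v)‖ :=
        Complex.abs_im_le_norm _
    _ = ‖∫ v : ℝ, Complex.exp (-(v*R)*Complex.I) * G v‖ := by
        rw [norm_mul, show ((R*t):ℂ) = ((R*t:ℝ):ℂ) by push_cast; ring,
          Complex.norm_exp_ofReal_mul_I, one_mul]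

lemma two_I_sin (θ : ℝ) :
    Complex.exp ((θ:ℂ)*Complex.I) - Complex.exp (-(θ:ℂ)*Complex.I)
      = 2*Complex.I*((Real.sin θ : ℝ):ℂ) := by
  rw [Complex.ofReal_sin]
  calc Complex.exp ((θ:ℂ)*Complex.I) - Complex.exp (-(θ:ℂ)*Complex.I)
      = -((Complex.I*Complex.I) * (Complex.exp ((θ:ℂ)*Complex.I)
          - Complex.exp (-(θ:ℂ)*Complex.I))) := by rw [Complex.I_mul_I]; ring
    _ = 2*Complex.I*((Complex.exp (-(θ:ℂ)*Complex.I) - Complex.exp ((θ:ℂ)*Complex.I))*Complex.I/2) := by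
        ring
    _ = 2*Complex.I*Complex.sin (θ:ℂ) := by rw [Complex.sin]

lemma fubini_main (α t R : ℝ) (hα : 0 < α) (hR : 0 < R) :
    ∫ s in (-R)..R, Complex.exp (Complex.I * t * s) / (Complex.I * s + α)
      = ((∫ u in Ioi (0:ℝ), Real.exp (-(α*u)) * (2 * Real.sin (R*(t-u))/(t-u)) : ℝ) : ℂ) := by
  have hRR : (-R) ≤ R := by linarith
  have hre : ∀ s : ℝ, (0:ℝ) < (Complex.I * s + α).re := by
    intro s; simp [hα]
  -- continuity helpers
  have ccast1 : Continuous fun p : ℝ×ℝ => (p.1 : ℂ) := Complex.continuous_ofReal.comp continuous_fst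
  have ccast2 : Continuous fun p : ℝ×ℝ => (p.2 : ℂ) := Complex.continuous_ofReal.comp continuous_snd
  have cF : Continuous fun p : ℝ×ℝ =>
      Complex.exp (Complex.I * t * p.1) * Complex.exp (-((Complex.I * p.1 + α)*p.2)) := by
    apply Continuous.mul
    · exact Complex.continuous_exp.comp (continuous_const.mul ccast1)
    · exact Complex.continuous_exp.comp
        ((((continuous_const.mul ccast1).add continuous_const).mul ccast2).neg)
  have hnorm : ∀ p : ℝ × ℝ, ‖Complex.exp (Complex.I * t * p.1)
      * Complex.exp (-((Complex.I * p.1 + α)*p.2))‖ = Real.exp (-(α*p.2)) := by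
    intro p
    rw [norm_mul, Complex.norm_exp, Complex.norm_exp]
    have h1 : (Complex.I * t * p.1).re = 0 := by simp
    have h2 : (-((Complex.I * p.1 + α)*p.2) : ℂ).re = -(α * p.2) := by simp
    rw [h1, h2, Real.exp_zero, one_mul]
  have hexp_int : IntegrableOn (fun u : ℝ => Real.exp (-(α*u))) (Ioi (0:ℝ)) := by
    have := exp_neg_integrableOn_Ioi 0 hα
    simpa [neg_mul] using this
  -- kernel identity
  have hker : ∀ s : ℝ, Complex.exp (Complex.I * t * s) / (Complex.I * s + α)
      = ∫ u in Ioi (0:ℝ), Complex.exp (Complex.I * t * s)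
          * Complex.exp (-((Complex.I * s + α)*u)) := by
    intro s
    rw [MeasureTheory.integral_const_mul, integral_cexp_Ioi _ (hre s), div_eq_mul_inv, one_div]
  -- product integrability
  have hprod : Integrable (fun p : ℝ × ℝ =>
      Complex.exp (Complex.I * t * p.1) * Complex.exp (-((Complex.I * p.1 + α)*p.2)))
      (((volume:Measure ℝ).restrict (Ioc (-R) R)).prod ((volume:Measure ℝ).restrict (Ioi 0))) := by
    rw [MeasureTheory.integrable_prod_iff cF.aestronglyMeasurable]
    constructor
    · filter_upwards [] with s
      apply Integrable.mono' (hexp_int) ?_ ?_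
      · exact (cF.comp (Continuous.prodMk_right s)).aestronglyMeasurable
      · filter_upwards [] with u
        exact le_of_eq (hnorm (s, u))
    · apply Integrable.mono' (g := fun _ : ℝ => 1/α) ?_ ?_ ?_
      · exact integrableOn_const measure_Ioc_lt_top.ne
      · exact AEStronglyMeasurable.integral_prod_right'
          (f := fun p : ℝ × ℝ => ‖Complex.exp (Complex.I * t * p.1)
            * Complex.exp (-((Complex.I * p.1 + α)*p.2))‖)
          cF.norm.aestronglyMeasurable
      · filter_upwards [] with s
        have h5 : ∫ u in Ioi (0:ℝ), ‖Complex.exp (Complex.I * t * s)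
            * Complex.exp (-((Complex.I * s + α)*u))‖ = ∫ u in Ioi (0:ℝ), Real.exp (-(α*u)) := by
          congr 1; funext u; exact hnorm (s,u)
        rw [Real.norm_eq_abs,
          _root_.abs_of_nonneg (MeasureTheory.integral_nonneg (fun _ => norm_nonneg _)), h5,
          one_div_eq_integral α hα]
  have swap := MeasureTheory.integral_integral_swap
    (f := fun (s u : ℝ) => Complex.exp (Complex.I * t * s)
      * Complex.exp (-((Complex.I * s + α)*u))) hprod
  -- a.e. u ≠ t
  have hae : ∀ᵐ u : ℝ, u ≠ t := by
    rw [MeasureTheory.ae_iff]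
    simpa using measure_singleton t
  calc ∫ s in (-R)..R, Complex.exp (Complex.I * t * s) / (Complex.I * s + α)
      = ∫ s in Ioc (-R) R, Complex.exp (Complex.I * t * s) / (Complex.I * s + α) := by
        rw [intervalIntegral.integral_of_le hRR]
    _ = ∫ s in Ioc (-R) R, ∫ u in Ioi (0:ℝ), Complex.exp (Complex.I * t * s)
          * Complex.exp (-((Complex.I * s + α)*u)) := by
        apply MeasureTheory.setIntegral_congr_fun measurableSet_Ioc
        intro s _
        exact hker s
    _ = ∫ u in Ioi (0:ℝ), ∫ s in Ioc (-R) R, Complex.exp (Complex.I * t * s)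
          * Complex.exp (-((Complex.I * s + α)*u)) := swap
    _ = ∫ u in Ioi (0:ℝ), ((Real.exp (-(α*u)) * (2 * Real.sin (R*(t-u))/(t-u)) : ℝ) : ℂ) := by
        apply MeasureTheory.integral_congr_ae
        filter_upwards [MeasureTheory.ae_restrict_of_ae hae] with u hu
        have htu : t - u ≠ 0 := sub_ne_zero.mpr (Ne.symm hu)
        have hd : ((t:ℂ) - ↑u) ≠ 0 := by
          rw [show ((t:ℂ) - ↑u) = ((t-u:ℝ):ℂ) by push_cast; ring]
          exact Complex.ofReal_ne_zero.mpr htu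
        have hc : Complex.I * ((t:ℂ) - ↑u) ≠ 0 := mul_ne_zero Complex.I_ne_zero hd
        rw [← intervalIntegral.integral_of_le hRR]
        have hsplit : ∀ s : ℝ, Complex.exp (Complex.I * t * s)
            * Complex.exp (-((Complex.I * s + α)*u))
            = Complex.exp (((-(α*u):ℝ):ℂ)) * Complex.exp ((Complex.I*((t:ℂ)-u))*s) := by
          intro s
          rw [← Complex.exp_add, ← Complex.exp_add]
          congr 1
          push_cast
          ring
        simp_rw [hsplit]
        rw [intervalIntegral.integral_const_mul, integral_exp_mul_complex hc,
          show Complex.I*((t:ℂ)-↑u)*(R:ℂ) = ((R*(t-u):ℝ):ℂ)*Complex.I by push_cast; ring,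
          show Complex.I*((t:ℂ)-↑u)*((-R:ℝ):ℂ) = -((R*(t-u):ℝ):ℂ)*Complex.I by push_cast; ring,
          two_I_sin (R*(t-u)), ← Complex.ofReal_exp]
        push_cast
        field_simp
    _ = ((∫ u in Ioi (0:ℝ), Real.exp (-(α*u)) * (2 * Real.sin (R*(t-u))/(t-u)) : ℝ) : ℂ) :=
        integral_ofReal

lemma exp_lip (a b : ℝ) (ha : 0 ≤ a) (hb : 0 ≤ b) :
    |Real.exp (-a) - Real.exp (-b)| ≤ |a - b| := by
  rcases le_total a b with h | h
  · rw [_root_.abs_of_nonneg (by simp [Real.exp_le_exp, h] : (0:ℝ) ≤ Real.exp (-a) - Real.exp (-b)),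
      _root_.abs_of_nonpos (by linarith : a - b ≤ 0)]
    have h1 : Real.exp (-b) = Real.exp (-a) * Real.exp (-(b-a)) := by
      rw [← Real.exp_add]; ring_nf
    have h2 : 1 - (b-a) ≤ Real.exp (-(b-a)) := by
      have := Real.add_one_le_exp (-(b-a)); linarith
    have h3 : Real.exp (-a) ≤ 1 := Real.exp_le_one_iff.mpr (by linarith)
    nlinarith [Real.exp_pos (-a)]
  · rw [_root_.abs_of_nonpos (by simp [Real.exp_le_exp, h] : Real.exp (-a) - Real.exp (-b) ≤ 0),
      _root_.abs_of_nonneg (by linarith : 0 ≤ a - b)]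
    have h1 : Real.exp (-a) = Real.exp (-b) * Real.exp (-(a-b)) := by
      rw [← Real.exp_add]; ring_nf
    have h2 : 1 - (a-b) ≤ Real.exp (-(a-b)) := by
      have := Real.add_one_le_exp (-(a-b)); linarith
    have h3 : Real.exp (-b) ≤ 1 := Real.exp_le_one_iff.mpr (by linarith)
    nlinarith [Real.exp_pos (-b)]

section Klimit
variable (α t : ℝ)

lemma meas_f : Measurable (fun u : ℝ => 2*Real.exp (-(α*u))/(t-u)) := by
  apply Measurable.div
  · exact (Real.measurable_exp.comp ((measurable_const.mul measurable_id).neg)).const_mul 2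
  · exact measurable_const.sub measurable_id

lemma hexp_int' (hα : 0 < α) (a : ℝ) :
    IntegrableOn (fun u : ℝ => Real.exp (-(α*u))) (Ioi a) := by
  have := exp_neg_integrableOn_Ioi a hα
  simpa [neg_mul] using this

-- indicator product rewrite
lemma indicator_mul_sin (S : Set ℝ) (f : ℝ → ℝ) (R : ℝ) (hS : MeasurableSet S) :
    ∫ u in S, f u * Real.sin (R*(t-u))
      = ∫ u : ℝ, (S.indicator f) u * Real.sin (R*(t-u)) := by
  rw [← MeasureTheory.integral_indicator hS]
  congr 1
  funext u
  by_cases hu : u ∈ S <;> simp [hu]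

lemma K_neg (hα : 0 < α) (ht : t < 0) :
    Tendsto (fun R : ℝ => ∫ u in Ioi (0:ℝ),
      Real.exp (-(α*u)) * (2 * Real.sin (R*(t-u))/(t-u))) atTop (𝓝 0) := by
  set f : ℝ → ℝ := fun u => 2*Real.exp (-(α*u))/(t-u) with hf
  have hfint : Integrable ((Ioi (0:ℝ)).indicator f) := by
    rw [MeasureTheory.integrable_indicator_iff measurableSet_Ioi]
    apply Integrable.mono' (((hexp_int' α hα 0).const_mul (2/(-t))))
      ((meas_f α t).aestronglyMeasurable.restrict)
    filter_upwards [MeasureTheory.ae_restrict_mem measurableSet_Ioi] with u hu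
    rw [Real.norm_eq_abs, abs_div, abs_mul]
    rw [_root_.abs_of_nonneg (by norm_num : (0:ℝ) ≤ 2),
      _root_.abs_of_pos (Real.exp_pos _),
      _root_.abs_of_neg (by linarith [hu.out] : t - u < 0)]
    rw [div_le_iff₀ (by linarith [hu.out] : (0:ℝ) < -(t-u))]
    have h1 : 2/(-t) * Real.exp (-(α*u)) * (-(t-u)) = 2*Real.exp (-(α*u)) * ((u-t)/(-t)) := by
      field_simp
      ring
    rw [h1]
    have h2 : (1:ℝ) ≤ (u-t)/(-t) := by
      rw [le_div_iff₀ (by linarith : (0:ℝ) < -t)]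
      linarith [hu.out]
    nlinarith [Real.exp_pos (-(α*u))]
  have h := rl_sin _ hfint t
  apply h.congr'
  filter_upwards [] with R
  rw [← indicator_mul_sin t (Ioi 0) f R measurableSet_Ioi]
  apply MeasureTheory.setIntegral_congr_fun measurableSet_Ioi
  intro u _
  simp only [hf]
  ring
end Klimit

lemma K_pos (α t : ℝ) (hα : 0 < α) (ht : 0 < t) :
    Tendsto (fun R : ℝ => ∫ u in Ioi (0:ℝ),
      Real.exp (-(α*u)) * (2 * Real.sin (R*(t-u))/(t-u))) atTop
      (𝓝 (2*π*Real.exp (-(α*t)))) := by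
  set f : ℝ → ℝ := fun u => 2*Real.exp (-(α*u))/(t-u) with hfdef
  set f₃ : ℝ → ℝ := fun u => 2*(Real.exp (-(α*u)) - Real.exp (-(α*t)))/(t-u) with hf3def
  have measF : ∀ R : ℝ, Measurable (fun u => Real.exp (-(α*u)) * (2*Real.sin (R*(t-u))/(t-u))) := by
    intro R
    apply Measurable.mul
    · exact Real.measurable_exp.comp ((measurable_const.mul measurable_id).neg)
    · apply Measurable.div
      · exact (Real.measurable_sin.comp (measurable_const.mul
          (measurable_const.sub measurable_id))).const_mul 2
      · exact measurable_const.sub measurable_id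
  have measf3 : Measurable f₃ := by
    apply Measurable.div
    · exact ((Real.measurable_exp.comp ((measurable_const.mul measurable_id).neg)).sub
        measurable_const).const_mul 2
    · exact measurable_const.sub measurable_id
  have hsinb : ∀ R u : ℝ, |2 * Real.sin (R*(t-u))/(t-u)| ≤ 2*|R| := by
    intro R u
    rcases eq_or_ne u t with rfl|hu
    · simp
    · have htu : t - u ≠ 0 := sub_ne_zero.mpr (Ne.symm hu)
      rw [abs_div, div_le_iff₀ (abs_pos.mpr htu), abs_mul,
        _root_.abs_of_nonneg (by norm_num : (0:ℝ) ≤ 2)]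
      have h1 : |Real.sin (R*(t-u))| ≤ |R| * |t-u| := by
        calc |Real.sin (R*(t-u))| ≤ |R*(t-u)| := Real.abs_sin_le_abs
          _ = |R| * |t-u| := abs_mul _ _
      nlinarith [abs_nonneg R, abs_nonneg (t-u)]
  -- bound for f₃
  have hf3b : ∀ u : ℝ, 0 ≤ u → |f₃ u| ≤ 2*α := by
    intro u hu
    rcases eq_or_ne u t with rfl|hu'
    · simp [hf3def]
      positivity
    · have htu : t - u ≠ 0 := sub_ne_zero.mpr (Ne.symm hu')
      try simp only [hf3def]
      rw [abs_div, div_le_iff₀ (abs_pos.mpr htu), abs_mul,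
        _root_.abs_of_nonneg (by norm_num : (0:ℝ) ≤ 2)]
      have h1 : |Real.exp (-(α*u)) - Real.exp (-(α*t))| ≤ α * |t-u| := by
        have := exp_lip (α*u) (α*t) (by positivity) (by positivity)
        calc |Real.exp (-(α*u)) - Real.exp (-(α*t))| ≤ |α*u - α*t| := this
          _ = α * |t-u| := by
            rw [show α*u - α*t = -(α*(t-u)) by ring, abs_neg, abs_mul,
              _root_.abs_of_pos hα]
      nlinarith [abs_nonneg (t-u)]
  -- tail integrable
  have hg2int : Integrable ((Ioi (2*t)).indicator f) := by
    rw [MeasureTheory.integrable_indicator_iff measurableSet_Ioi]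
    apply Integrable.mono' (((hexp_int' α hα (2*t)).const_mul (2/t)))
      ((meas_f α t).aestronglyMeasurable.restrict)
    filter_upwards [MeasureTheory.ae_restrict_mem measurableSet_Ioi] with u hu
    have hut : t < u - t := by have := hu.out; linarith
    try simp only [hfdef]
    rw [Real.norm_eq_abs, abs_div, abs_mul,
      _root_.abs_of_nonneg (by norm_num : (0:ℝ) ≤ 2),
      _root_.abs_of_pos (Real.exp_pos _),
      _root_.abs_of_neg (by linarith : t - u < 0),
      div_le_iff₀ (by linarith : (0:ℝ) < -(t-u))]
    have h1 : 2/t * Real.exp (-(α*u)) * (-(t-u)) = 2*Real.exp (-(α*u)) * ((u-t)/t) := by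
      field_simp
      ring
    rw [h1]
    have h2 : (1:ℝ) ≤ (u-t)/t := by
      rw [le_div_iff₀ ht]; linarith
    nlinarith [Real.exp_pos (-(α*u))]
  have hg3int : Integrable ((Ioc (0:ℝ) (2*t)).indicator f₃) := by
    rw [MeasureTheory.integrable_indicator_iff measurableSet_Ioc]
    apply Integrable.mono' (g := fun _ : ℝ => 2*α)
      (integrableOn_const measure_Ioc_lt_top.ne)
      measf3.aestronglyMeasurable.restrict
    filter_upwards [MeasureTheory.ae_restrict_mem measurableSet_Ioc] with u hu
    exact hf3b u hu.out.1.le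
  -- integrability of F R on pieces
  have hFmid : ∀ R : ℝ, IntegrableOn (fun u => Real.exp (-(α*u)) * (2*Real.sin (R*(t-u))/(t-u)))
      (Ioc (0:ℝ) (2*t)) := by
    intro R
    apply Integrable.mono' (g := fun _ : ℝ => 2*|R|)
      (integrableOn_const measure_Ioc_lt_top.ne)
      (measF R).aestronglyMeasurable.restrict
    filter_upwards [MeasureTheory.ae_restrict_mem measurableSet_Ioc] with u hu
    rw [Real.norm_eq_abs, abs_mul, _root_.abs_of_pos (Real.exp_pos _)]
    calc Real.exp (-(α*u)) * |2*Real.sin (R*(t-u))/(t-u)| ≤ 1 * (2*|R|) := by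
          apply mul_le_mul (Real.exp_le_one_iff.mpr (by nlinarith [hu.out.1]))
            (hsinb R u) (abs_nonneg _) zero_le_one
      _ = 2*|R| := one_mul _
  have habs_sin1 : ∀ x : ℝ, |Real.sin x| ≤ 1 := fun x =>
    abs_le.mpr ⟨Real.neg_one_le_sin x, Real.sin_le_one x⟩
  have hFtail : ∀ R : ℝ, IntegrableOn (fun u => Real.exp (-(α*u)) * (2*Real.sin (R*(t-u))/(t-u)))
      (Ioi (2*t)) := by
    intro R
    apply Integrable.mono' ((hg2int.abs.restrict (s := Ioi (2*t))))
      (measF R).aestronglyMeasurable.restrict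
    filter_upwards [MeasureTheory.ae_restrict_mem measurableSet_Ioi] with u hu
    rw [Set.indicator_of_mem hu]
    try simp only [hfdef]
    rw [Real.norm_eq_abs, abs_mul, _root_.abs_of_pos (Real.exp_pos _),
      abs_div, abs_mul, _root_.abs_of_nonneg (by norm_num : (0:ℝ) ≤ 2),
      abs_div, abs_mul, _root_.abs_of_nonneg (by norm_num : (0:ℝ) ≤ 2),
      _root_.abs_of_pos (Real.exp_pos _)]
    have h1 : Real.exp (-(α*u)) * (2*|Real.sin (R*(t-u))|/|t-u|)
        = (2*Real.exp (-(α*u))/|t-u|) * |Real.sin (R*(t-u))| := by ring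
    rw [h1]
    exact mul_le_of_le_one_right (by positivity) (habs_sin1 _)
  -- the three tendsto pieces
  have hT2 : Tendsto (fun R : ℝ => ∫ u : ℝ, ((Ioi (2*t)).indicator f) u * Real.sin (R*(t-u)))
      atTop (𝓝 0) := rl_sin _ hg2int t
  have hT3 : Tendsto (fun R : ℝ => ∫ u : ℝ, ((Ioc (0:ℝ) (2*t)).indicator f₃) u * Real.sin (R*(t-u)))
      atTop (𝓝 0) := rl_sin _ hg3int t
  have hTmid : Tendsto (fun R : ℝ => (Real.exp (-(α*t)) * 2) * ∫ v in (-t)..t, Real.sin (R*v)/v)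
      atTop (𝓝 ((Real.exp (-(α*t)) * 2) * π)) :=
    (tendsto_sinc_two_sided t t ht ht).const_mul _
  have total := (hT3.add hTmid).add hT2
  rw [show (0 + (Real.exp (-(α*t)) * 2) * π) + 0 = 2*π*Real.exp (-(α*t)) by ring] at total
  apply total.congr'
  filter_upwards [] with R
  -- now show the decomposition identity for each R
  have hsplit_set : ∫ u in Ioi (0:ℝ), Real.exp (-(α*u)) * (2*Real.sin (R*(t-u))/(t-u))
      = (∫ u in Ioc (0:ℝ) (2*t), Real.exp (-(α*u)) * (2*Real.sin (R*(t-u))/(t-u)))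
        + ∫ u in Ioi (2*t), Real.exp (-(α*u)) * (2*Real.sin (R*(t-u))/(t-u)) := by
    rw [← MeasureTheory.setIntegral_union (Set.Ioc_disjoint_Ioi le_rfl) measurableSet_Ioi
      (hFmid R) (hFtail R), Set.Ioc_union_Ioi_eq_Ioi (by linarith : (0:ℝ) ≤ 2*t)]
  -- tail piece
  have htail_eq : ∫ u in Ioi (2*t), Real.exp (-(α*u)) * (2*Real.sin (R*(t-u))/(t-u))
      = ∫ u : ℝ, ((Ioi (2*t)).indicator f) u * Real.sin (R*(t-u)) := by
    rw [← indicator_mul_sin t (Ioi (2*t)) f R measurableSet_Ioi]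
    apply MeasureTheory.setIntegral_congr_fun measurableSet_Ioi
    intro u _
    try simp only [hfdef]
    ring
  -- middle piece decomposition
  have hmid_eq : ∫ u in Ioc (0:ℝ) (2*t), Real.exp (-(α*u)) * (2*Real.sin (R*(t-u))/(t-u))
      = (∫ u : ℝ, ((Ioc (0:ℝ) (2*t)).indicator f₃) u * Real.sin (R*(t-u)))
        + (Real.exp (-(α*t)) * 2) * ∫ v in (-t)..t, Real.sin (R*v)/v := by
    have hpt : ∀ u : ℝ, Real.exp (-(α*u)) * (2*Real.sin (R*(t-u))/(t-u))
        = f₃ u * Real.sin (R*(t-u))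
          + (Real.exp (-(α*t)) * 2) * (Real.sin (R*(t-u))/(t-u)) := by
      intro u
      rcases eq_or_ne u t with rfl|hu'
      · simp [hf3def]
      · have htu : t - u ≠ 0 := sub_ne_zero.mpr (Ne.symm hu')
        try simp only [hf3def]
        field_simp
        ring
    have hint1 : IntegrableOn (fun u => f₃ u * Real.sin (R*(t-u))) (Ioc (0:ℝ) (2*t)) := by
      apply Integrable.mono' (g := fun _ : ℝ => 2*α*1)
        (integrableOn_const measure_Ioc_lt_top.ne)
        ((measf3.mul (Real.measurable_sin.comp (measurable_const.mul
          (measurable_const.sub measurable_id)))).aestronglyMeasurable.restrict)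
      filter_upwards [MeasureTheory.ae_restrict_mem measurableSet_Ioc] with u hu
      rw [Real.norm_eq_abs, Pi.mul_apply, abs_mul]
      exact mul_le_mul (hf3b u hu.out.1.le) (habs_sin1 _) (abs_nonneg _) (by positivity)
    have hint2 : IntegrableOn (fun u => (Real.exp (-(α*t)) * 2) * (Real.sin (R*(t-u))/(t-u)))
        (Ioc (0:ℝ) (2*t)) := by
      apply Integrable.mono' (g := fun _ : ℝ => Real.exp (-(α*t)) * 2 * |R|)
        (integrableOn_const measure_Ioc_lt_top.ne)
      · apply Measurable.aestronglyMeasurable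
        apply Measurable.const_mul
        apply Measurable.div
        · exact Real.measurable_sin.comp (measurable_const.mul (measurable_const.sub measurable_id))
        · exact measurable_const.sub measurable_id
      · filter_upwards [] with u
        rw [Real.norm_eq_abs, abs_mul,
          _root_.abs_of_pos (by positivity : (0:ℝ) < Real.exp (-(α*t)) * 2)]
        have h3 : |Real.sin (R*(t-u))/(t-u)| ≤ |R| := by
          have h4 := hsinb R u
          rw [show (2:ℝ)*Real.sin (R*(t-u))/(t-u) = 2*(Real.sin (R*(t-u))/(t-u)) by ring,
            abs_mul, _root_.abs_of_nonneg (by norm_num : (0:ℝ) ≤ 2)] at h4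
          linarith
        exact mul_le_mul_of_nonneg_left h3 (by positivity)
    calc ∫ u in Ioc (0:ℝ) (2*t), Real.exp (-(α*u)) * (2*Real.sin (R*(t-u))/(t-u))
        = ∫ u in Ioc (0:ℝ) (2*t), (f₃ u * Real.sin (R*(t-u))
            + (Real.exp (-(α*t)) * 2) * (Real.sin (R*(t-u))/(t-u))) := by
          apply MeasureTheory.setIntegral_congr_fun measurableSet_Ioc
          intro u _
          exact hpt u
      _ = (∫ u in Ioc (0:ℝ) (2*t), f₃ u * Real.sin (R*(t-u)))
            + ∫ u in Ioc (0:ℝ) (2*t), (Real.exp (-(α*t)) * 2) * (Real.sin (R*(t-u))/(t-u)) :=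
          MeasureTheory.integral_add hint1 hint2
      _ = (∫ u : ℝ, ((Ioc (0:ℝ) (2*t)).indicator f₃) u * Real.sin (R*(t-u)))
            + (Real.exp (-(α*t)) * 2) * ∫ v in (-t)..t, Real.sin (R*v)/v := by
          congr 1
          · exact indicator_mul_sin t (Ioc 0 (2*t)) f₃ R measurableSet_Ioc
          · rw [MeasureTheory.integral_const_mul]
            congr 1
            rw [← intervalIntegral.integral_of_le (by linarith : (0:ℝ) ≤ 2*t)]
            rw [show ∫ u in (0:ℝ)..(2*t), Real.sin (R*(t-u))/(t-u)
                = ∫ u in (0:ℝ)..(2*t), (fun v => Real.sin (R*v)/v) (t-u) from rfl]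
            rw [intervalIntegral.integral_comp_sub_left (fun v => Real.sin (R*v)/v) t]
            rw [show t - 2*t = -t by ring, sub_zero]
  rw [hsplit_set, htail_eq, hmid_eq]

lemma main_pos (α t : ℝ) (hα : 0 < α) (ht : t ≠ 0) :
    Filter.Tendsto
        (fun R : ℝ => (1/(2*Real.pi) : ℂ) *
          ∫ s in (-R)..R, Complex.exp (Complex.I * t * s) / (Complex.I * s + α))
        Filter.atTop
        (nhds ((Real.exp (-t*α) * Set.indicator (Set.Ioi (0:ℝ)) (fun _ => (1:ℝ)) t : ℝ) : ℂ)) := by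
  have hπ : (Real.pi : ℝ) ≠ 0 := Real.pi_ne_zero
  rcases ht.lt_or_gt with htneg | htpos
  · have hK := K_neg α t hα htneg
    have h2 : Tendsto (fun R : ℝ => (1/(2*Real.pi) : ℂ) *
        ((∫ u in Ioi (0:ℝ), Real.exp (-(α*u)) * (2 * Real.sin (R*(t-u))/(t-u)) : ℝ) : ℂ))
        atTop (𝓝 ((1/(2*Real.pi) : ℂ) * ((0:ℝ):ℂ))) :=
      Tendsto.const_mul _ ((Complex.continuous_ofReal.tendsto 0).comp hK)
    have h3 : ((Real.exp (-t*α) * Set.indicator (Set.Ioi (0:ℝ)) (fun _ => (1:ℝ)) t : ℝ) : ℂ)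
        = (1/(2*Real.pi) : ℂ) * ((0:ℝ):ℂ) := by
      rw [Set.indicator_of_notMem (by simp [htneg.not_gt] : t ∉ Set.Ioi (0:ℝ))]
      simp
    rw [h3]
    apply h2.congr'
    filter_upwards [eventually_gt_atTop (0:ℝ)] with R hR
    rw [fubini_main α t R hα hR]
  · have hK := K_pos α t hα htpos
    have h2 : Tendsto (fun R : ℝ => (1/(2*Real.pi) : ℂ) *
        ((∫ u in Ioi (0:ℝ), Real.exp (-(α*u)) * (2 * Real.sin (R*(t-u))/(t-u)) : ℝ) : ℂ))
        atTop (𝓝 ((1/(2*Real.pi) : ℂ) * ((2*π*Real.exp (-(α*t)) : ℝ):ℂ))) :=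
      Tendsto.const_mul _ ((Complex.continuous_ofReal.tendsto _).comp hK)
    have h3 : ((Real.exp (-t*α) * Set.indicator (Set.Ioi (0:ℝ)) (fun _ => (1:ℝ)) t : ℝ) : ℂ)
        = (1/(2*Real.pi) : ℂ) * ((2*π*Real.exp (-(α*t)) : ℝ):ℂ) := by
      rw [Set.indicator_of_mem (by simpa using htpos : t ∈ Set.Ioi (0:ℝ))]
      push_cast
      have : ((Real.pi : ℝ) : ℂ) ≠ 0 := Complex.ofReal_ne_zero.mpr hπ
      field_simp
    rw [h3]
    apply h2.congr'
    filter_upwards [eventually_gt_atTop (0:ℝ)] with R hR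
    rw [fubini_main α t R hα hR]

theorem principal_value_exp_div (α : ℝ) (hα : α ≠ 0) (t : ℝ) (ht : t ≠ 0) :
    (0 < α →
      Filter.Tendsto
        (fun R : ℝ => (1/(2*Real.pi) : ℂ) *
          ∫ s in (-R)..R, Complex.exp (Complex.I * t * s) / (Complex.I * s + α))
        Filter.atTop
        (nhds ((Real.exp (-t*α) * Set.indicator (Set.Ioi (0:ℝ)) (fun _ => (1:ℝ)) t : ℝ) : ℂ))) ∧
    (α < 0 →
      Filter.Tendsto
        (fun R : ℝ => (1/(2*Real.pi) : ℂ) *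
          ∫ s in (-R)..R, Complex.exp (Complex.I * t * s) / (Complex.I * s + α))
        Filter.atTop
        (nhds ((-(Real.exp (-t*α) * Set.indicator (Set.Iio (0:ℝ)) (fun _ => (1:ℝ)) t) : ℝ) : ℂ))) := by
  constructor
  · intro h0
    exact main_pos α t h0 ht
  · intro hneg
    have hmain := main_pos (-α) (-t) (by linarith) (neg_ne_zero.mpr ht)
    have heq : ∀ R : ℝ, (1/(2*Real.pi) : ℂ) *
        ∫ s in (-R)..R, Complex.exp (Complex.I * t * s) / (Complex.I * s + α)
        = -((1/(2*Real.pi) : ℂ) *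
          ∫ s in (-R)..R, Complex.exp (Complex.I * (-t:ℝ) * s) / (Complex.I * s + ((-α:ℝ):ℂ))) := by
      intro R
      have hsub := intervalIntegral.integral_comp_neg
        (a := -R) (b := R) (fun s : ℝ => Complex.exp (Complex.I * t * s) / (Complex.I * s + α))
      rw [neg_neg] at hsub
      rw [← hsub]
      have hpt : ∀ x : ℝ, Complex.exp (Complex.I * t * (-x:ℝ)) / (Complex.I * ((-x:ℝ):ℂ) + α)
          = -(Complex.exp (Complex.I * (-t:ℝ) * x) / (Complex.I * x + ((-α:ℝ):ℂ))) := by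
        intro x
        rw [show (Complex.I * t * ((-x:ℝ):ℂ)) = Complex.I * ((-t:ℝ):ℂ) * x by push_cast; ring,
          show (Complex.I * ((-x:ℝ):ℂ) + α) = -(Complex.I * x + ((-α:ℝ):ℂ)) by push_cast; ring,
          div_neg]
      simp_rw [hpt]
      rw [intervalIntegral.integral_neg]
      ring
    have hval : -(((Real.exp (-(-t)*(-α)) * Set.indicator (Set.Ioi (0:ℝ)) (fun _ => (1:ℝ)) (-t) : ℝ)) : ℂ)
        = ((-(Real.exp (-t*α) * Set.indicator (Set.Iio (0:ℝ)) (fun _ => (1:ℝ)) t) : ℝ) : ℂ) := by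
      have hind : Set.indicator (Set.Ioi (0:ℝ)) (fun _ => (1:ℝ)) (-t)
          = Set.indicator (Set.Iio (0:ℝ)) (fun _ => (1:ℝ)) t := by
        rcases lt_or_gt_of_ne ht with h | h
        · rw [Set.indicator_of_mem (by simpa using h), Set.indicator_of_mem (by simpa using h)]
        · rw [Set.indicator_of_notMem (by simp [h.le] : (-t) ∉ Set.Ioi (0:ℝ)),
            Set.indicator_of_notMem (by simp [h.le] : t ∉ Set.Iio (0:ℝ))]
      rw [hind, show -(-t)*(-α) = -t*α by ring]
      push_cast
      ring
    rw [← hval]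
    apply Tendsto.congr (fun R => (heq R).symm)
    exact hmain.neg
end

section
/- Let α < 0 and g be a Schwartz function on ℝ. Then (1/(2π)) ∫_ℝ (e^{its}/(is+α))·ĝ(s) ds = −∫_{t}^{∞} e^{−(t−s)α} g(s) ds. -/
set_option maxHeartbeats 1000000

open Real Set Filter Complex MeasureTheory FourierTransform Topology

lemma cexp_integral_Ioi_aux (c : ℂ) (hc : c.re < 0) :
    ∫ u in Set.Ioi (0:ℝ), Complex.exp (c * u) = -1/c := by
  have hc0 : c ≠ 0 := fun h => by simp [h] at hc
  have D : ∀ x : ℝ, HasDerivAt (fun y : ℝ => Complex.exp (c * y) / c)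
      (Complex.exp (c * x)) x := by
    intro x
    rw [← mul_div_cancel_right₀ (Complex.exp (c * x)) hc0]
    apply ((Complex.hasDerivAt_exp _).comp x _).div_const c
    simpa only [mul_one, id] using ((hasDerivAt_id (x : ℂ)).const_mul c).comp_ofReal
  have hint : IntegrableOn (fun u : ℝ => Complex.exp (c * u)) (Set.Ioi 0) := by
    refine (exp_neg_integrableOn_Ioi 0 (show (0:ℝ) < -c.re by linarith)).mono'
      (Continuous.aestronglyMeasurable (by continuity)) ?_
    filter_upwards with u
    simp [Complex.norm_exp, neg_mul, Complex.add_re, Complex.mul_re]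
  have htend : Tendsto (fun u : ℝ => Complex.exp (c * u) / c) atTop (𝓝 0) := by
    apply squeeze_zero_norm (a := fun u : ℝ => Real.exp (c.re * u) / ‖c‖)
    · intro u
      simp [Complex.norm_exp, Complex.mul_re]
    · rw [show (0:ℝ) = 0 / ‖c‖ by simp]
      apply Tendsto.div_const
      rw [Real.tendsto_exp_comp_nhds_zero]
      exact (Filter.tendsto_const_mul_atBot_of_neg hc).2 tendsto_id
  have := integral_Ioi_of_hasDerivAt_of_tendsto' (fun x _ => D x) hint htend
  simpa [neg_div] using this

theorem fourier_resolvent_neg (α : ℝ) (hα : α < 0) (g : SchwartzMap ℝ ℂ) (t : ℝ) :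
    (1/(2*Real.pi) : ℂ) *
      ∫ s : ℝ, (Complex.exp (Complex.I * t * s) / (Complex.I * s + α)) *
        (∫ x : ℝ, Complex.exp (-(Complex.I * s * x)) * g x)
    = -∫ s in Set.Ici t, Complex.exp (-(((t - s : ℝ) : ℂ) * α)) * g s := by
  have hπ : (0:ℝ) < 2 * Real.pi := by positivity
  have hπ' : (2*Real.pi : ℝ) ≠ 0 := ne_of_gt hπ
  -- the inner integral is the Fourier transform of g at s / (2π)
  have hG : ∀ s : ℝ, (∫ x : ℝ, Complex.exp (-(Complex.I * s * x)) * g x)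
      = 𝓕 (g : ℝ → ℂ) (s / (2*Real.pi)) := by
    intro s
    rw [Real.fourier_real_eq_integral_exp_smul]
    congr 1
    funext x
    rw [smul_eq_mul]
    congr 1
    rw [show (-2*Real.pi*x*(s/(2*Real.pi)) : ℝ) = -(x*s) by field_simp]
    push_cast
    ring
  have hFg_int : Integrable (𝓕 (⇑g)) := (SchwartzMap.fourierTransformCLM ℂ g).integrable
  have hFg_cont : Continuous (𝓕 (⇑g)) := (SchwartzMap.fourierTransformCLM ℂ g).continuous
  -- Fourier inversion in the non-unitary normalization
  have hinv : ∀ v : ℝ,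
      (∫ s : ℝ, Complex.exp (Complex.I * v * s) * 𝓕 (⇑g) (s / (2*Real.pi)))
        = (2*Real.pi : ℝ) * g v := by
    intro v
    have h1 : 𝓕⁻ (𝓕 (⇑g)) v = g v :=
      g.integrable.fourierInv_fourier_eq hFg_int g.continuous.continuousAt
    have h2 : 𝓕⁻ (𝓕 (⇑g)) v
        = ∫ ξ : ℝ, Complex.exp (Complex.I * v * (2*Real.pi*ξ)) • 𝓕 (⇑g) ξ := by
      rw [Real.fourierInv_eq_fourier_neg,
        Real.fourier_real_eq_integral_exp_smul]
      congr 1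
      funext ξ
      congr 1
      push_cast
      ring
    have h3 : (∫ s : ℝ, Complex.exp (Complex.I * v * s) * 𝓕 (⇑g) (s / (2*Real.pi)))
        = |2*Real.pi| • ∫ ξ : ℝ, Complex.exp (Complex.I * v * (2*Real.pi*ξ)) • 𝓕 (⇑g) ξ := by
      rw [← MeasureTheory.Measure.integral_comp_div
        (fun ξ : ℝ => Complex.exp (Complex.I * v * (2*Real.pi*ξ)) • 𝓕 (⇑g) ξ) (2*Real.pi)]
      congr 1
      funext s
      rw [smul_eq_mul]
      congr 2
      have hπc : (Real.pi:ℂ) ≠ 0 := Complex.ofReal_ne_zero.mpr Real.pi_ne_zero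
      push_cast
      field_simp
    rw [h3, ← h2, h1, abs_of_pos hπ, real_smul]
  -- the resolvent as an integral
  have hres : ∀ s : ℝ, (Complex.I * s + α)⁻¹
      = -∫ u in Set.Ioi (0:ℝ), Complex.exp ((Complex.I * s + α) * u) := by
    intro s
    have hre : (Complex.I * s + (α:ℂ)).re < 0 := by
      simpa [Complex.add_re, Complex.mul_re] using hα
    rw [cexp_integral_Ioi_aux _ hre]
    have : (Complex.I * s + (α:ℂ)) ≠ 0 := fun h => by simp [h] at hre
    field_simp
  -- the function under the double integral
  set H : ℝ → ℝ → ℂ := fun s u =>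
    Complex.exp ((α:ℂ) * u) * (Complex.exp (Complex.I * (t+u) * s) * 𝓕 (⇑g) (s / (2*Real.pi)))
    with hHdef
  have hHcont : Continuous (Function.uncurry H) := by
    apply Continuous.mul
    · exact Complex.continuous_exp.comp (by continuity)
    · exact (Complex.continuous_exp.comp (by continuity)).mul
        (hFg_cont.comp (by continuity))
  -- integrability of H on the product
  have hHint : Integrable (Function.uncurry H)
      (volume.prod (volume.restrict (Set.Ioi (0:ℝ)))) := by
    have int1 : Integrable (fun s : ℝ => ‖𝓕 (⇑g) (s / (2*Real.pi))‖) :=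
      hFg_int.norm.comp_div hπ'
    have int2 : IntegrableOn (fun u : ℝ => Real.exp (α * u)) (Set.Ioi (0:ℝ)) := by
      have := exp_neg_integrableOn_Ioi (0:ℝ) (show (0:ℝ) < -α by linarith)
      simpa using this
    refine (int1.mul_prod int2).mono' hHcont.aestronglyMeasurable ?_
    filter_upwards with p
    rw [Function.uncurry]
    simp only [hHdef, norm_mul]
    rw [Complex.norm_exp, Complex.norm_exp]
    have h1 : ((α:ℂ) * (p.2:ℂ)).re = α * p.2 := by
      simp [Complex.mul_re]
    have h2 : (Complex.I * ((t:ℂ)+(p.2:ℂ)) * (p.1:ℂ)).re = 0 := by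
      simp [Complex.mul_re, Complex.mul_im, Complex.add_re, Complex.add_im]
    rw [h1, h2, Real.exp_zero, one_mul]
    exact le_of_eq (mul_comm _ _)
  -- pointwise rewriting of the integrand
  have hpt : ∀ s : ℝ,
      (Complex.exp (Complex.I * t * s) / (Complex.I * s + α)) *
        (∫ x : ℝ, Complex.exp (-(Complex.I * s * x)) * g x)
      = -∫ u in Set.Ioi (0:ℝ), H s u := by
    intro s
    rw [hG s, div_eq_mul_inv, hres s]
    rw [mul_neg, neg_mul, neg_inj]
    rw [mul_comm (Complex.exp (Complex.I * t * s)), mul_assoc,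
      ← MeasureTheory.integral_mul_const]
    refine setIntegral_congr_ae measurableSet_Ioi (Eventually.of_forall fun u _ => ?_)
    simp only [hHdef]
    rw [← mul_assoc, ← mul_assoc, ← Complex.exp_add, ← Complex.exp_add]
    congr 2
    push_cast
    ring
  -- main computation
  rw [show (∫ s : ℝ, (Complex.exp (Complex.I * t * s) / (Complex.I * s + α)) *
        (∫ x : ℝ, Complex.exp (-(Complex.I * s * x)) * g x))
      = ∫ s : ℝ, -∫ u in Set.Ioi (0:ℝ), H s u from
    integral_congr_ae (Eventually.of_forall fun s => hpt s)]
  rw [integral_neg, MeasureTheory.integral_integral_swap hHint]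
  have hswap : (∫ u in Set.Ioi (0:ℝ), ∫ s : ℝ, H s u)
      = (2*Real.pi : ℝ) * ∫ u in Set.Ioi (0:ℝ), Complex.exp ((α:ℂ) * u) * g (t+u) := by
    rw [← MeasureTheory.integral_const_mul]
    refine setIntegral_congr_ae measurableSet_Ioi (Eventually.of_forall fun u _ => ?_)
    simp only [hHdef]
    rw [MeasureTheory.integral_const_mul]
    have := hinv (t + u)
    push_cast at this
    rw [this]
    push_cast
    ring
  rw [hswap]
  have hcoef : (1/(2*Real.pi) : ℂ) * -((2*Real.pi : ℝ) *
        ∫ u in Set.Ioi (0:ℝ), Complex.exp ((α:ℂ) * u) * g (t+u))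
      = -∫ u in Set.Ioi (0:ℝ), Complex.exp ((α:ℂ) * u) * g (t+u) := by
    have h2πc : (2*(Real.pi:ℂ)) ≠ 0 := by
      simp [Real.pi_ne_zero]
    push_cast
    rw [mul_neg, neg_inj, ← mul_assoc, one_div, inv_mul_cancel₀ h2πc, one_mul]
  rw [hcoef]
  -- change of variables u ↦ t + u
  congr 1
  have key : (∫ u in Set.Ioi (0:ℝ), Complex.exp ((α:ℂ) * u) * g (t+u))
      = ∫ s in Set.Ioi t, Complex.exp (-(((t - s : ℝ) : ℂ) * α)) * g s := by
    set φ : ℝ → ℂ := fun s => Complex.exp (-(((t - s : ℝ) : ℂ) * α)) * g s with hφ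
    rw [← MeasureTheory.integral_indicator measurableSet_Ioi,
      ← MeasureTheory.integral_indicator measurableSet_Ioi]
    conv_rhs => rw [← MeasureTheory.integral_add_left_eq_self ((Set.Ioi t).indicator φ) t]
    refine integral_congr_ae (Eventually.of_forall fun u => ?_)
    dsimp only
    by_cases hu : 0 < u
    · rw [Set.indicator_of_mem (Set.mem_Ioi.mpr hu),
        Set.indicator_of_mem (Set.mem_Ioi.mpr (by linarith : t < t + u)), hφ]
      congr 1
      push_cast
      ring
    · rw [Set.indicator_of_notMem (by simpa using hu),
        Set.indicator_of_notMem (by simp; linarith)]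
  rw [key, MeasureTheory.integral_Ici_eq_integral_Ioi]
end

section
/- Let d ≥ 3, c > 0, and τ̃ ≥ 1 with dist(τ̃, ℤ) ≥ c. Let [τ̃] denote the largest integer strictly less than τ̃. Then for every s < 0, ∑_{n=1}^{[τ̃]} n^{−2/d} e^{(τ̃−n)s} ≤ C(e^{−c|s|}|s|^{2/d−1} + e^{−c|s|}) for a constant C depending only on c and d. -/
open Real Finset

lemma icc_insert (N : ℤ) (hN : 1 ≤ N) :
    Finset.Icc (1:ℤ) (N+1) = insert (N+1) (Finset.Icc 1 N) := by
  ext n; simp only [Finset.mem_Icc, Finset.mem_insert]; omega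

lemma aux_sumA (a : ℝ) (ha : 0 < a) (ha1 : a < 1) (N : ℤ) (hN : 1 ≤ N) :
    ∑ n ∈ Finset.Icc (1:ℤ) N, (n:ℝ) ^ (-a) ≤ (1/(1-a)) * (N:ℝ) ^ (1-a) := by
  have h1a : (0:ℝ) < 1 - a := by linarith
  refine Int.le_induction (motive := fun N _ => ∑ n ∈ Finset.Icc (1:ℤ) N, (n:ℝ) ^ (-a) ≤ (1/(1-a)) * (N:ℝ) ^ (1-a)) ?_ ?_ N hN
  · simp only [Finset.Icc_self, Finset.sum_singleton, Int.cast_one, Real.one_rpow]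
    rw [mul_one, one_le_div h1a]; linarith
  · intro N hN ih
    rw [icc_insert N hN, Finset.sum_insert (by simp)]
    have hx : (1:ℝ) ≤ (N:ℝ) := by exact_mod_cast hN
    have hx0 : (0:ℝ) < (N:ℝ) := by linarith
    set x : ℝ := (N:ℝ) with hxdef
    have hy0 : (0:ℝ) < x + 1 := by linarith
    have hcast : ((N+1 : ℤ) : ℝ) = x + 1 := by push_cast; ring
    rw [hcast]
    have hamgm : x ^ (1-a) * (x+1) ^ a ≤ (1-a) * x + a * (x+1) :=
      Real.geom_mean_le_arith_mean2_weighted (by linarith) ha.le hx0.le hy0.le (by ring)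
    have hysplit : (x+1) ^ ((1:ℝ)-a) = (x+1) * (x+1) ^ (-a) := by
      rw [show (1:ℝ) - a = 1 + (-a) by ring, Real.rpow_add hy0, Real.rpow_one]
    have hyinv : (x+1) ^ a * (x+1) ^ (-a) = 1 := by
      rw [← Real.rpow_add hy0]; simp
    have hxy : x ^ ((1:ℝ)-a) ≤ (x + a) * (x+1) ^ (-a) := by
      have h2 : x ^ ((1:ℝ)-a) * (x+1) ^ a ≤ x + a := by nlinarith
      calc x ^ ((1:ℝ)-a) = x ^ ((1:ℝ)-a) * ((x+1) ^ a * (x+1) ^ (-a)) := by rw [hyinv]; ring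
        _ = (x ^ ((1:ℝ)-a) * (x+1) ^ a) * (x+1) ^ (-a) := by ring
        _ ≤ (x + a) * (x+1) ^ (-a) :=
            mul_le_mul_of_nonneg_right h2 (Real.rpow_nonneg hy0.le _)
    have e1 : (1/(1-a)) * ((x+1) * (x+1)^(-a))
        = (x+1)^(-a) + (1/(1-a)) * ((x+a) * (x+1)^(-a)) := by
      field_simp; ring
    have h3 : (1/(1-a)) * x ^ ((1:ℝ)-a) ≤ (1/(1-a)) * ((x+a) * (x+1)^(-a)) :=
      mul_le_mul_of_nonneg_left hxy (by positivity)
    calc (x+1) ^ (-a) + ∑ n ∈ Finset.Icc (1:ℤ) N, (n:ℝ) ^ (-a)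
        ≤ (x+1) ^ (-a) + (1/(1-a)) * x ^ ((1:ℝ)-a) := by linarith
      _ ≤ (x+1)^(-a) + (1/(1-a)) * ((x+a) * (x+1)^(-a)) := by linarith
      _ = (1/(1-a)) * ((x+1) * (x+1)^(-a)) := e1.symm
      _ = (1/(1-a)) * (x+1) ^ ((1:ℝ)-a) := by rw [hysplit]

lemma aux_sumB (t : ℝ) (ht : 0 < t) (N : ℤ) (hN : 1 ≤ N) :
    ∑ n ∈ Finset.Icc (1:ℤ) N, Real.exp (-(((N:ℝ) - n)*t)) ≤ 1 + 1/t := by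
  have hr : Real.exp (-t) < 1 := Real.exp_lt_one_iff.mpr (by linarith)
  have hr0 : 0 < 1 - Real.exp (-t) := by linarith
  have main : ∀ N : ℤ, 1 ≤ N →
      ∑ n ∈ Finset.Icc (1:ℤ) N, Real.exp (-(((N:ℝ) - n)*t)) ≤ (1 - Real.exp (-t))⁻¹ := by
    intro N hN
    refine Int.le_induction (motive := fun N _ => ∑ n ∈ Finset.Icc (1:ℤ) N, Real.exp (-(((N:ℝ) - n)*t)) ≤ (1 - Real.exp (-t))⁻¹) ?_ ?_ N hN
    · simp only [Finset.Icc_self, Finset.sum_singleton, Int.cast_one, sub_self, zero_mul,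
        neg_zero, Real.exp_zero]
      rw [le_inv_comm₀ one_pos hr0]; linarith [Real.exp_pos (-t)]
    · intro N hN ih
      rw [icc_insert N hN, Finset.sum_insert (by simp)]
      have e2 : ∑ n ∈ Finset.Icc (1:ℤ) N, Real.exp (-(((((N+1:ℤ)):ℝ) - n)*t))
          = Real.exp (-t) * ∑ n ∈ Finset.Icc (1:ℤ) N, Real.exp (-(((N:ℝ) - n)*t)) := by
        rw [Finset.mul_sum]
        refine Finset.sum_congr rfl fun n _ => ?_
        rw [← Real.exp_add]; push_cast; ring_nf
      have e3 : Real.exp (-(((((N+1:ℤ)):ℝ) - ((N+1:ℤ):ℝ))*t)) = 1 := by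
        simp
      have hexp0 : (0:ℝ) < Real.exp (-t) := Real.exp_pos _
      calc Real.exp (-(((((N+1:ℤ)):ℝ) - ((N+1:ℤ):ℝ))*t))
            + ∑ n ∈ Finset.Icc (1:ℤ) N, Real.exp (-(((((N+1:ℤ)):ℝ) - n)*t))
          = 1 + Real.exp (-t) * ∑ n ∈ Finset.Icc (1:ℤ) N, Real.exp (-(((N:ℝ) - n)*t)) := by
            rw [e2, e3]
        _ ≤ 1 + Real.exp (-t) * (1 - Real.exp (-t))⁻¹ := by
            have := mul_le_mul_of_nonneg_left ih hexp0.le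
            linarith
        _ = (1 - Real.exp (-t))⁻¹ := by field_simp; ring
  have h2 : (1 - Real.exp (-t))⁻¹ ≤ 1 + 1/t := by
    rw [inv_le_iff_one_le_mul₀ hr0]
    have hb : t + 1 ≤ Real.exp t := Real.add_one_le_exp t
    have he : Real.exp (-t) * Real.exp t = 1 := by rw [← Real.exp_add]; simp
    have het : 0 < Real.exp t := Real.exp_pos t
    have : (t+1) * Real.exp (-t) ≤ 1 := by
      calc (t+1) * Real.exp (-t) ≤ Real.exp t * Real.exp (-t) := by
            apply mul_le_mul_of_nonneg_right hb (Real.exp_pos _).le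
        _ = 1 := by rw [mul_comm]; exact he
    have h4 : (1 + 1/t) * (1 - Real.exp (-t)) = 1 + 1/t - (t+1)*Real.exp (-t)/t := by
      field_simp
    rw [h4]
    have h5 : (t+1)*Real.exp (-t)/t ≤ 1/t := by
      exact div_le_div_of_nonneg_right this ht.le
    linarith
  exact (main N hN).trans h2

lemma aux_C (b x : ℝ) (hb0 : 0 ≤ b) (hb1 : b ≤ 1) (hx : 0 ≤ x) :
    x ^ b * Real.exp (-(x/2)) ≤ 3 := by
  have hE0 : 0 < Real.exp (-(x/2)) := Real.exp_pos _
  have hE1 : Real.exp (-(x/2)) ≤ 1 := Real.exp_le_one_iff.mpr (by linarith)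
  have hxb : x ^ b ≤ x + 1 := by
    rcases le_or_gt x 1 with h | h
    · have := Real.rpow_le_one hx h hb0
      linarith
    · calc x ^ b ≤ x ^ (1:ℝ) := Real.rpow_le_rpow_of_exponent_le h.le hb1
        _ = x := Real.rpow_one x
        _ ≤ x + 1 := by linarith
  have hxE : x * Real.exp (-(x/2)) ≤ 2 := by
    have h1 : x/2 + 1 ≤ Real.exp (x/2) := Real.add_one_le_exp _
    have h2 : Real.exp (x/2) * Real.exp (-(x/2)) = 1 := by rw [← Real.exp_add]; simp
    nlinarith
  nlinarith [mul_le_mul_of_nonneg_right hxb hE0.le]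

lemma aux_core (a : ℝ) (ha : 0 < a) (ha1 : a < 1) (t : ℝ) (ht : 0 < t) (N : ℤ) (hN : 1 ≤ N) :
    ∑ n ∈ Finset.Icc (1:ℤ) N, (n:ℝ) ^ (-a) * Real.exp (-(((N:ℝ) - n)*t))
      ≤ (3*(1/(1-a))+2) * (t ^ (a-1) + 1) := by
  have h1a : (0:ℝ) < 1 - a := by linarith
  have hK : (0:ℝ) < 1/(1-a) := by positivity
  have hNR : (1:ℝ) ≤ (N:ℝ) := by exact_mod_cast hN
  have hNR0 : (0:ℝ) < (N:ℝ) := by linarith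
  have htp : (0:ℝ) ≤ t ^ (a-1) := Real.rpow_nonneg ht.le _
  have hSA := aux_sumA a ha ha1 N hN
  have hSB := aux_sumB t ht N hN
  have hSA0 : (0:ℝ) ≤ ∑ n ∈ Finset.Icc (1:ℤ) N, (n:ℝ) ^ (-a) := by
    apply Finset.sum_nonneg; intro n hn
    have : (0:ℤ) < n := by have := (Finset.mem_Icc.mp hn).1; omega
    exact Real.rpow_nonneg (by exact_mod_cast this.le) _
  rcases le_or_gt 1 ((N:ℝ)*t) with hcase | hcase
  · -- N*t ≥ 1
    set x : ℝ := (N:ℝ)*t with hxdef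
    have hx0 : 0 < x := by positivity
    -- pointwise split
    have hsplit : ∀ n ∈ Finset.Icc (1:ℤ) N,
        (n:ℝ) ^ (-a) * Real.exp (-(((N:ℝ) - n)*t))
          ≤ Real.exp (-((N:ℝ)*t/2)) * (n:ℝ) ^ (-a)
            + (2*(N:ℝ)^(-a)) * Real.exp (-(((N:ℝ) - n)*t)) := by
      intro n hn
      obtain ⟨hn1, hnN⟩ := Finset.mem_Icc.mp hn
      have hn1R : (1:ℝ) ≤ (n:ℝ) := by exact_mod_cast hn1
      have hnNR : (n:ℝ) ≤ (N:ℝ) := by exact_mod_cast hnN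
      have hna0 : (0:ℝ) ≤ (n:ℝ) ^ (-a) := Real.rpow_nonneg (by linarith) _
      have hexp0 : (0:ℝ) ≤ Real.exp (-(((N:ℝ) - n)*t)) := (Real.exp_pos _).le
      rcases le_or_gt (2*n) N with h2n | h2n
      · have h2nR : 2*(n:ℝ) ≤ (N:ℝ) := by exact_mod_cast h2n
        have : Real.exp (-(((N:ℝ) - n)*t)) ≤ Real.exp (-((N:ℝ)*t/2)) := by
          apply Real.exp_le_exp.mpr
          have : (N:ℝ)/2 ≤ (N:ℝ) - n := by linarith
          nlinarith
        have h3 : (n:ℝ) ^ (-a) * Real.exp (-(((N:ℝ) - n)*t))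
            ≤ (n:ℝ) ^ (-a) * Real.exp (-((N:ℝ)*t/2)) := by
          exact mul_le_mul_of_nonneg_left this hna0
        have hpos : (0:ℝ) ≤ (2*(N:ℝ)^(-a)) * Real.exp (-(((N:ℝ) - n)*t)) := by
          have := Real.rpow_nonneg hNR0.le (-a); positivity
        nlinarith
      · have h2nR : (N:ℝ) < 2*(n:ℝ) := by exact_mod_cast h2n
        have hhalf : (N:ℝ)/2 ≤ (n:ℝ) := by linarith
        have hhalf0 : (0:ℝ) < (N:ℝ)/2 := by linarith
        have hb1 : (n:ℝ) ^ (-a) ≤ ((N:ℝ)/2) ^ (-a) :=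
          Real.rpow_le_rpow_of_nonpos hhalf0 hhalf (by linarith)
        have hb2 : ((N:ℝ)/2) ^ (-a) = (N:ℝ)^(-a) * (2:ℝ)^a := by
          rw [Real.div_rpow hNR0.le (by norm_num : (0:ℝ) ≤ 2)]
          rw [Real.rpow_neg (by norm_num : (0:ℝ) ≤ 2)]
          field_simp
        have hb3 : (2:ℝ)^a ≤ 2 := by
          calc (2:ℝ)^a ≤ (2:ℝ)^(1:ℝ) := Real.rpow_le_rpow_of_exponent_le (by norm_num) ha1.le
            _ = 2 := Real.rpow_one 2
        have hb4 : (n:ℝ) ^ (-a) ≤ 2*(N:ℝ)^(-a) := by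
          have hNa : (0:ℝ) ≤ (N:ℝ)^(-a) := Real.rpow_nonneg hNR0.le _
          nlinarith
        have h3 : (n:ℝ) ^ (-a) * Real.exp (-(((N:ℝ) - n)*t))
            ≤ (2*(N:ℝ)^(-a)) * Real.exp (-(((N:ℝ) - n)*t)) :=
          mul_le_mul_of_nonneg_right hb4 hexp0
        have hpos : (0:ℝ) ≤ Real.exp (-((N:ℝ)*t/2)) * (n:ℝ) ^ (-a) := by positivity
        linarith
    have hT : ∑ n ∈ Finset.Icc (1:ℤ) N, (n:ℝ) ^ (-a) * Real.exp (-(((N:ℝ) - n)*t))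
        ≤ Real.exp (-((N:ℝ)*t/2)) * (∑ n ∈ Finset.Icc (1:ℤ) N, (n:ℝ) ^ (-a))
          + (2*(N:ℝ)^(-a)) * (∑ n ∈ Finset.Icc (1:ℤ) N, Real.exp (-(((N:ℝ) - n)*t))) := by
      rw [Finset.mul_sum, Finset.mul_sum, ← Finset.sum_add_distrib]
      exact Finset.sum_le_sum hsplit
    -- bound 1
    have hNpow : (N:ℝ) ^ ((1:ℝ)-a) = x ^ ((1:ℝ)-a) * t ^ (a-1) := by
      have : (N:ℝ) = x / t := by field_simp; exact hxdef.symm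
      rw [this, Real.div_rpow hx0.le ht.le]
      rw [show a - 1 = -(1-a) by ring, Real.rpow_neg ht.le]
      ring
    have hb1 : Real.exp (-((N:ℝ)*t/2)) * (∑ n ∈ Finset.Icc (1:ℤ) N, (n:ℝ) ^ (-a))
        ≤ 3 * (1/(1-a)) * t ^ (a-1) := by
      have e1 : Real.exp (-((N:ℝ)*t/2)) * (∑ n ∈ Finset.Icc (1:ℤ) N, (n:ℝ) ^ (-a))
          ≤ Real.exp (-((N:ℝ)*t/2)) * ((1/(1-a)) * (N:ℝ) ^ ((1:ℝ)-a)) :=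
        mul_le_mul_of_nonneg_left hSA (Real.exp_pos _).le
      have e2 : Real.exp (-((N:ℝ)*t/2)) * ((1/(1-a)) * (N:ℝ) ^ ((1:ℝ)-a))
          = (x ^ ((1:ℝ)-a) * Real.exp (-(x/2))) * ((1/(1-a)) * t ^ (a-1)) := by
        rw [hNpow, hxdef]; ring_nf
      have e3 : x ^ ((1:ℝ)-a) * Real.exp (-(x/2)) ≤ 3 :=
        aux_C (1-a) x h1a.le (by linarith) hx0.le
      have e4 : (0:ℝ) ≤ (1/(1-a)) * t ^ (a-1) := by positivity
      calc Real.exp (-((N:ℝ)*t/2)) * (∑ n ∈ Finset.Icc (1:ℤ) N, (n:ℝ) ^ (-a))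
          ≤ (x ^ ((1:ℝ)-a) * Real.exp (-(x/2))) * ((1/(1-a)) * t ^ (a-1)) := by
            rw [← e2]; exact e1
        _ ≤ 3 * ((1/(1-a)) * t ^ (a-1)) := mul_le_mul_of_nonneg_right e3 e4
        _ = 3 * (1/(1-a)) * t ^ (a-1) := by ring
    -- bound 2
    have hNa1 : (N:ℝ)^(-a) ≤ 1 := Real.rpow_le_one_of_one_le_of_nonpos hNR (by linarith)
    have hNat : (N:ℝ)^(-a) / t ≤ t ^ (a-1) := by
      have hNdiv : (N:ℝ) = x / t := by field_simp; exact hxdef.symm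
      have e : (N:ℝ)^(-a) = x^(-a) * t^a := by
        rw [hNdiv, Real.div_rpow hx0.le ht.le, Real.rpow_neg ht.le, div_eq_mul_inv, inv_inv]
      have hxa : x^(-a) ≤ 1 := Real.rpow_le_one_of_one_le_of_nonpos hcase (by linarith)
      have hta : (0:ℝ) ≤ t^a := Real.rpow_nonneg ht.le _
      have hNta : (N:ℝ)^(-a) ≤ t^a := by rw [e]; nlinarith
      have e2 : t ^ (a-1) = t^a / t := by
        rw [Real.rpow_sub ht, Real.rpow_one]
      rw [e2]
      exact div_le_div_of_nonneg_right hNta ht.le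
    have hb2 : (2*(N:ℝ)^(-a)) * (∑ n ∈ Finset.Icc (1:ℤ) N, Real.exp (-(((N:ℝ) - n)*t)))
        ≤ 2 + 2 * t ^ (a-1) := by
      have hNa0 : (0:ℝ) ≤ (N:ℝ)^(-a) := Real.rpow_nonneg hNR0.le _
      have hSB0 : (0:ℝ) ≤ ∑ n ∈ Finset.Icc (1:ℤ) N, Real.exp (-(((N:ℝ) - n)*t)) :=
        Finset.sum_nonneg fun n _ => (Real.exp_pos _).le
      have e1 : (2*(N:ℝ)^(-a)) * (∑ n ∈ Finset.Icc (1:ℤ) N, Real.exp (-(((N:ℝ) - n)*t)))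
          ≤ (2*(N:ℝ)^(-a)) * (1 + 1/t) := by
        apply mul_le_mul_of_nonneg_left hSB (by positivity)
      have e2 : (2*(N:ℝ)^(-a)) * (1 + 1/t) = 2*(N:ℝ)^(-a) + 2*((N:ℝ)^(-a)/t) := by
        field_simp
      nlinarith
    calc ∑ n ∈ Finset.Icc (1:ℤ) N, (n:ℝ) ^ (-a) * Real.exp (-(((N:ℝ) - n)*t))
        ≤ Real.exp (-((N:ℝ)*t/2)) * (∑ n ∈ Finset.Icc (1:ℤ) N, (n:ℝ) ^ (-a))
          + (2*(N:ℝ)^(-a)) * (∑ n ∈ Finset.Icc (1:ℤ) N, Real.exp (-(((N:ℝ) - n)*t))) := hT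
      _ ≤ 3 * (1/(1-a)) * t ^ (a-1) + (2 + 2 * t ^ (a-1)) := by linarith
      _ ≤ (3*(1/(1-a))+2) * (t ^ (a-1) + 1) := by
          have : (3*(1/(1-a))+2) * (t ^ (a-1) + 1)
              = 3*(1/(1-a))*t^(a-1) + 2*t^(a-1) + 3*(1/(1-a)) + 2 := by ring
          linarith
  · -- N*t < 1
    have hT : ∑ n ∈ Finset.Icc (1:ℤ) N, (n:ℝ) ^ (-a) * Real.exp (-(((N:ℝ) - n)*t))
        ≤ ∑ n ∈ Finset.Icc (1:ℤ) N, (n:ℝ) ^ (-a) := by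
      apply Finset.sum_le_sum
      intro n hn
      obtain ⟨hn1, hnN⟩ := Finset.mem_Icc.mp hn
      have hn1R : (1:ℝ) ≤ (n:ℝ) := by exact_mod_cast hn1
      have hnNR : (n:ℝ) ≤ (N:ℝ) := by exact_mod_cast hnN
      have hE : Real.exp (-(((N:ℝ) - n)*t)) ≤ 1 := by
        apply Real.exp_le_one_iff.mpr
        have : (0:ℝ) ≤ ((N:ℝ) - n)*t := mul_nonneg (by linarith) ht.le
        linarith
      have hna0 : (0:ℝ) ≤ (n:ℝ) ^ (-a) := Real.rpow_nonneg (by linarith) _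
      calc (n:ℝ) ^ (-a) * Real.exp (-(((N:ℝ) - n)*t)) ≤ (n:ℝ) ^ (-a) * 1 :=
            mul_le_mul_of_nonneg_left hE hna0
        _ = (n:ℝ) ^ (-a) := mul_one _
    have hNt : (N:ℝ) ≤ 1/t := by
      rw [le_div_iff₀ ht]; linarith
    have hNpow : (N:ℝ) ^ ((1:ℝ)-a) ≤ t ^ (a-1) := by
      calc (N:ℝ) ^ ((1:ℝ)-a) ≤ (1/t) ^ ((1:ℝ)-a) :=
            Real.rpow_le_rpow hNR0.le hNt h1a.le
        _ = t ^ (a-1) := by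
            rw [one_div, ← Real.rpow_neg_one t, ← Real.rpow_mul ht.le]
            congr 1; ring
    have hKt : (1/(1-a)) * (N:ℝ) ^ ((1:ℝ)-a) ≤ (1/(1-a)) * t ^ (a-1) :=
      mul_le_mul_of_nonneg_left hNpow hK.le
    have hfin : (1/(1-a)) * t ^ (a-1) ≤ (3*(1/(1-a))+2) * (t ^ (a-1) + 1) := by
      have he : (3*(1/(1-a))+2) * (t ^ (a-1) + 1)
          = 3*(1/(1-a))*t^(a-1) + 2*t^(a-1) + 3*(1/(1-a)) + 2 := by ring
      rw [he]
      linarith [mul_nonneg hK.le htp, htp, hK.le]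
    linarith

theorem sum_bound_I2 (d : ℕ) (hd : 3 ≤ d) (c : ℝ) (hc : 0 < c) :
    ∃ C > (0:ℝ), ∀ τ : ℝ, 1 ≤ τ → (∀ m : ℤ, c ≤ |τ - m|) →
      ∀ s : ℝ, s < 0 →
        (∑ n ∈ Finset.Icc (1:ℤ) ⌊τ⌋, (n:ℝ) ^ (-(2:ℝ)/d) * Real.exp ((τ - n) * s))
          ≤ C * (Real.exp (-(c*|s|)) * |s| ^ ((2:ℝ)/d - 1) + Real.exp (-(c*|s|))) := by
  have hd3 : (3:ℝ) ≤ (d:ℝ) := by exact_mod_cast hd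
  have hd0 : (0:ℝ) < (d:ℝ) := by linarith
  set a : ℝ := 2/(d:ℝ) with ha_def
  have ha : 0 < a := by positivity
  have ha1 : a < 1 := by
    rw [ha_def, div_lt_one hd0]; linarith
  have h1a : (0:ℝ) < 1 - a := by linarith
  refine ⟨3*(1/(1-a))+2, by positivity, ?_⟩
  intro τ hτ hdist s hs
  simp only [neg_div]
  set t : ℝ := -s with hteq
  have ht : 0 < t := by rw [hteq]; linarith
  have hs' : s = -t := by rw [hteq]; ring
  have habs : |s| = t := by rw [abs_of_neg hs, hteq]
  set N : ℤ := ⌊τ⌋ with hNdef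
  have hN : 1 ≤ N := by
    rw [hNdef]
    exact Int.le_floor.mpr (by exact_mod_cast hτ)
  have hNle : (N:ℝ) ≤ τ := Int.floor_le τ
  have hcN : c ≤ τ - N := by
    have h := hdist N
    rcases abs_cases (τ - (N:ℝ)) with ⟨he, _⟩ | ⟨he, hneg⟩
    · rw [he] at h; exact h
    · linarith
  have hpoint : ∀ n ∈ Finset.Icc (1:ℤ) N,
      (n:ℝ) ^ (-a) * Real.exp ((τ - n) * s)
        ≤ Real.exp (-(c*t)) * ((n:ℝ) ^ (-a) * Real.exp (-(((N:ℝ) - n)*t))) := by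
    intro n hn
    obtain ⟨hn1, hnN⟩ := Finset.mem_Icc.mp hn
    have hn1R : (1:ℝ) ≤ (n:ℝ) := by exact_mod_cast hn1
    have hnNR : (n:ℝ) ≤ (N:ℝ) := by exact_mod_cast hnN
    have hna0 : (0:ℝ) ≤ (n:ℝ) ^ (-a) := Real.rpow_nonneg (by linarith) _
    have hmono : (τ - n) * s ≤ (c + ((N:ℝ) - n)) * s := by
      apply mul_le_mul_of_nonpos_right _ hs.le
      linarith
    have heq : (c + ((N:ℝ) - n)) * s = -(c*t) + -((((N:ℝ) - n))*t) := by
      rw [hs']; ring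
    have hee : Real.exp ((τ - n) * s)
        ≤ Real.exp (-(c*t)) * Real.exp (-(((N:ℝ) - n)*t)) := by
      rw [← Real.exp_add, ← heq]
      exact Real.exp_le_exp.mpr hmono
    calc (n:ℝ) ^ (-a) * Real.exp ((τ - n) * s)
        ≤ (n:ℝ) ^ (-a) * (Real.exp (-(c*t)) * Real.exp (-(((N:ℝ) - n)*t))) :=
          mul_le_mul_of_nonneg_left hee hna0
      _ = Real.exp (-(c*t)) * ((n:ℝ) ^ (-a) * Real.exp (-(((N:ℝ) - n)*t))) := by ring
  have hstep1 : (∑ n ∈ Finset.Icc (1:ℤ) N, (n:ℝ) ^ (-a) * Real.exp ((τ - n) * s))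
      ≤ Real.exp (-(c*t)) *
        (∑ n ∈ Finset.Icc (1:ℤ) N, (n:ℝ) ^ (-a) * Real.exp (-(((N:ℝ) - n)*t))) := by
    rw [Finset.mul_sum]
    exact Finset.sum_le_sum hpoint
  have hcore := aux_core a ha ha1 t ht N hN
  have hE0 : (0:ℝ) ≤ Real.exp (-(c*t)) := (Real.exp_pos _).le
  calc (∑ n ∈ Finset.Icc (1:ℤ) N, (n:ℝ) ^ (-a) * Real.exp ((τ - n) * s))
      ≤ Real.exp (-(c*t)) *
        (∑ n ∈ Finset.Icc (1:ℤ) N, (n:ℝ) ^ (-a) * Real.exp (-(((N:ℝ) - n)*t))) := hstep1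
    _ ≤ Real.exp (-(c*t)) * ((3*(1/(1-a))+2) * (t ^ (a-1) + 1)) :=
        mul_le_mul_of_nonneg_left hcore hE0
    _ = (3*(1/(1-a))+2) * (Real.exp (-(c*t)) * t ^ (a-1) + Real.exp (-(c*t))) := by ring
    _ = (3*(1/(1-a))+2) * (Real.exp (-(c*|s|)) * |s| ^ (a-1) + Real.exp (-(c*|s|))) := by
        rw [habs]
end
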